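/- arXiv:2211.00081 — 2 statements merged into one kernel-verified Lean document; each statement's English description precedes it below -/
import Mathlib

section
/- Let ρ ∈ (0,1), g ∈ C¹[0,T] with g(0) ≠ 0. Define b(λ, t₀) = ∫_0^{t₀} g(t₀ - s) s^{ρ-1} E_{ρ,ρ}(-λ s^ρ) ds. Then b(λ, t₀) = g(0) t₀^ρ E_{ρ,ρ+1}(-λ t₀^ρ) + g'(ξ) t₀^{ρ+1} E_{ρ,ρ+2}(-λ t₀^ρ) for some ξ ∈ [0, t₀]. -/
/-- The two-parameter Mittag-Leffler function (real argument). -/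
noncomputable def ML (ρ μ x : ℝ) : ℝ := ∑' k : ℕ, x ^ k / Real.Gamma (ρ * k + μ)

open Set Filter MeasureTheory intervalIntegral Real

lemma ML_gamma_ratio {ρ x : ℝ} (hρ : 0 < ρ) (hx : 2 ≤ x) :
    Real.Gamma x * (x - 1) ^ ρ ≤ Real.Gamma (x + ρ) := by
  have h0 : (0:ℝ) < x - 1 := by linarith
  have hxpos : (0:ℝ) < x := by linarith
  have hs := Real.convexOn_log_Gamma.slope_mono_adjacent
    (show x - 1 ∈ Set.Ioi (0:ℝ) from h0) (show x + ρ ∈ Set.Ioi (0:ℝ) by simp; linarith)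
    (show x - 1 < x by linarith) (show x < x + ρ by linarith)
  simp only [Function.comp] at hs
  have hgam : Real.Gamma x = (x - 1) * Real.Gamma (x - 1) := by
    have := Real.Gamma_add_one (show x - 1 ≠ 0 by linarith)
    rwa [sub_add_cancel] at this
  have hΓx : 0 < Real.Gamma x := Real.Gamma_pos_of_pos hxpos
  have hΓx1 : 0 < Real.Gamma (x - 1) := Real.Gamma_pos_of_pos h0
  have hslope1 : (Real.log (Real.Gamma x) - Real.log (Real.Gamma (x - 1))) / (x - (x - 1))
      = Real.log (x - 1) := by
    rw [hgam, Real.log_mul (by linarith) hΓx1.ne']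
    field_simp
    ring
  rw [hslope1] at hs
  have h2 : Real.log (Real.Gamma x) + ρ * Real.log (x - 1) ≤ Real.log (Real.Gamma (x + ρ)) := by
    have h3 : x + ρ - x = ρ := by ring
    rw [h3, le_div_iff₀ hρ] at hs
    linarith
  calc Real.Gamma x * (x - 1) ^ ρ
      = Real.exp (Real.log (Real.Gamma x) + ρ * Real.log (x - 1)) := by
        rw [Real.exp_add, Real.exp_log hΓx, Real.rpow_def_of_pos h0, mul_comm ρ]
    _ ≤ Real.exp (Real.log (Real.Gamma (x + ρ))) := Real.exp_le_exp.mpr h2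
    _ = Real.Gamma (x + ρ) := Real.exp_log (Real.Gamma_pos_of_pos (by linarith))

lemma ML_summable {ρ μ : ℝ} (hρ : 0 < ρ) (hμ : 0 < μ) (r : ℝ) :
    Summable (fun k : ℕ => r ^ k / Real.Gamma (ρ * k + μ)) := by
  set M : ℝ := max 1 ((2 * |r| + 1) ^ (1/ρ)) with hM
  have hM1 : (1:ℝ) ≤ M := le_max_left _ _
  obtain ⟨N, hN⟩ := exists_nat_ge ((M + 2 - μ) / ρ)
  apply summable_of_ratio_norm_eventually_le (r := 1/2) (by norm_num)
  filter_upwards [Filter.eventually_ge_atTop N] with k hk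
  have hxk : (N:ℝ) ≤ k := Nat.cast_le.mpr hk
  have hρk : M + 2 - μ ≤ ρ * k := by
    rw [div_le_iff₀ hρ] at hN
    calc M + 2 - μ ≤ ρ * N := by linarith
      _ ≤ ρ * k := by nlinarith
  set x : ℝ := ρ * k + μ with hxdef
  have hx2 : 2 ≤ x := by simp only [hxdef]; nlinarith
  have hΓx : 0 < Real.Gamma x := Real.Gamma_pos_of_pos (by linarith)
  have hΓxρ : 0 < Real.Gamma (x + ρ) := Real.Gamma_pos_of_pos (by linarith)
  have hx1 : 2 * |r| + 1 ≤ (x - 1) ^ ρ := by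
    have hb : (0:ℝ) ≤ 2 * |r| + 1 := by positivity
    have h1 : (2 * |r| + 1) ^ (1/ρ) ≤ x - 1 := by
      have : M ≤ x - 1 := by simp only [hxdef]; nlinarith
      exact le_trans (le_max_right _ _) this
    calc 2 * |r| + 1 = ((2 * |r| + 1) ^ (1/ρ)) ^ ρ := by
          rw [← Real.rpow_mul hb, one_div_mul_cancel hρ.ne', Real.rpow_one]
      _ ≤ (x - 1) ^ ρ := Real.rpow_le_rpow (Real.rpow_nonneg hb _) h1 hρ.le
  have hgam := ML_gamma_ratio hρ hx2
  have hxρ : ρ * ((k+1 : ℕ) : ℝ) + μ = x + ρ := by push_cast; simp only [hxdef]; ring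
  rw [hxρ]
  rw [norm_div, norm_div, Real.norm_eq_abs, Real.norm_eq_abs, Real.norm_eq_abs,
    Real.norm_eq_abs, abs_of_pos hΓx, abs_of_pos hΓxρ, abs_pow, abs_pow]
  rw [div_le_iff₀ hΓxρ, pow_succ]
  have key : Real.Gamma x * (2 * |r| + 1) ≤ Real.Gamma (x + ρ) :=
    le_trans (by nlinarith) hgam
  have hrk : (0:ℝ) ≤ |r| ^ k := by positivity
  rw [show (1/2 : ℝ) * (|r| ^ k / Real.Gamma x) * Real.Gamma (x + ρ)
      = |r| ^ k * Real.Gamma (x + ρ) / (Real.Gamma x * 2) from by ring,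
    le_div_iff₀ (by positivity : (0:ℝ) < Real.Gamma x * 2)]
  nlinarith [mul_le_mul_of_nonneg_left key hrk, hΓx.le, abs_nonneg r]

lemma ML_term_eq {ρ lam c μ s : ℝ} (hs : 0 < s) (k : ℕ) :
    (-lam * s ^ ρ) ^ k / Real.Gamma (ρ * k + μ) * s ^ c
      = (-lam) ^ k * s ^ (ρ * k + c) / Real.Gamma (ρ * k + μ) := by
  rw [mul_pow, ← Real.rpow_natCast (s ^ ρ) k, ← Real.rpow_mul hs.le, Real.rpow_add hs]
  ring

lemma ML_rep {ρ lam μ : ℝ} (c : ℝ) {s : ℝ} (hs : 0 < s) :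
    s ^ c * ML ρ μ (-lam * s ^ ρ)
      = ∑' k : ℕ, (-lam) ^ k * s ^ (ρ * k + c) / Real.Gamma (ρ * k + μ) := by
  rw [ML, mul_comm, ← tsum_mul_right]
  exact tsum_congr fun k => ML_term_eq hs k

lemma ML_summable_terms {ρ μ lam : ℝ} (hρ : 0 < ρ) (hμ : 0 < μ) (c : ℝ) {s : ℝ} (hs : 0 < s) :
    Summable (fun k : ℕ => (-lam) ^ k * s ^ (ρ * k + c) / Real.Gamma (ρ * k + μ)) :=
  ((ML_summable hρ hμ (-lam * s ^ ρ)).mul_right (s ^ c)).congr fun k => ML_term_eq hs k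

lemma ML_continuous {ρ μ : ℝ} (hρ : 0 < ρ) (hμ : 0 < μ) : Continuous (ML ρ μ) := by
  rw [continuous_iff_continuousAt]; intro x
  have hML : ML ρ μ = fun y => ∑' k : ℕ, y ^ k / Real.Gamma (ρ * k + μ) := funext fun y => rfl
  have hmem : Set.Icc (-(|x|+1)) (|x|+1) ∈ nhds x :=
    Icc_mem_nhds (by cases abs_cases x <;> linarith) (by cases abs_cases x <;> linarith)
  refine ContinuousWithinAt.continuousAt ?_ hmem
  refine ContinuousOn.continuousWithinAt ?_
    (⟨by linarith [neg_abs_le x], by linarith [le_abs_self x]⟩)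
  rw [hML]
  have ht := tendstoUniformlyOn_tsum_nat (f := fun (k:ℕ) (y:ℝ) => y ^ k / Real.Gamma (ρ * k + μ))
    (u := fun k : ℕ => (|x|+1) ^ k / Real.Gamma (ρ * k + μ)) (ML_summable hρ hμ (|x|+1))
    (s := Set.Icc (-(|x|+1)) (|x|+1)) ?_
  · exact ht.continuousOn (Filter.Frequently.of_forall fun n =>
      (continuous_finset_sum _ fun k _ => (continuous_pow k).div_const _).continuousOn)
  · intro n y hy
    have hΓ : 0 < Real.Gamma (ρ * n + μ) := Real.Gamma_pos_of_pos (by positivity)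
    rw [Real.norm_eq_abs, abs_div, abs_of_pos hΓ, abs_pow]
    rw [div_le_div_iff_of_pos_right hΓ]
    exact pow_le_pow_left₀ (abs_nonneg y) (abs_le.mpr ⟨hy.1, hy.2⟩) n

lemma ML_zero {ρ μ : ℝ} : ML ρ μ 0 = 1 / Real.Gamma μ := by
  rw [ML, tsum_eq_single 0]
  · simp
  · intro k hk; simp [zero_pow hk]

lemma ML_shift {ρ : ℝ} (hρ : 0 < ρ) (x : ℝ) : ML ρ 1 x = 1 + x * ML ρ (ρ+1) x := by
  rw [ML, Summable.tsum_eq_zero_add (ML_summable hρ one_pos x), ML, ← tsum_mul_left]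
  congr 1
  · simp
  · refine tsum_congr fun k => ?_
    rw [pow_succ]
    push_cast
    rw [show ρ*(k+1)+1 = ρ*k+(ρ+1) from by ring]
    ring

lemma rbeta_int {p q t : ℝ} (hp : -1 < p) (hq : -1 < q) (ht : 0 < t) :
    IntervalIntegrable (fun s => s ^ p * (t - s) ^ q) volume 0 t := by
  have h1 : IntervalIntegrable (fun s => s ^ p * (t - s) ^ q) volume 0 (t/2) := by
    apply IntervalIntegrable.mul_continuousOn (intervalIntegral.intervalIntegrable_rpow' hp)
    apply (continuousOn_const.sub continuousOn_id).rpow_const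
    intro x hx
    rw [uIcc_of_le (by linarith)] at hx
    exact Or.inl (by simp only [Pi.sub_apply, id]; linarith [hx.2])
  have hbase : IntervalIntegrable (fun x : ℝ => x ^ q) volume 0 (t/2) :=
    intervalIntegral.intervalIntegrable_rpow' hq
  have hcomp := (hbase.comp_sub_left t).symm
  rw [sub_zero, show t - t/2 = t/2 from by ring] at hcomp
  have hcomp' : IntervalIntegrable (fun x => (t - x) ^ q) volume (t/2) t := hcomp
  have h2 : IntervalIntegrable (fun s => s ^ p * (t - s) ^ q) volume (t/2) t := by
    apply hcomp'.continuousOn_mul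
    apply continuousOn_id.rpow_const
    intro x hx
    rw [uIcc_of_le (by linarith)] at hx
    exact Or.inl (by simp only [id]; linarith [hx.1])
  exact h1.trans h2

lemma rbeta {p q t : ℝ} (hp : -1 < p) (hq : -1 < q) (ht : 0 < t) :
    ∫ s in (0:ℝ)..t, s ^ p * (t - s) ^ q
      = Real.Gamma (p+1) * Real.Gamma (q+1) / Real.Gamma (p+q+2) * t ^ (p+q+1) := by
  have hp1 : (0:ℝ) < p + 1 := by linarith
  have hq1 : (0:ℝ) < q + 1 := by linarith
  have hofreal : (((∫ s in (0:ℝ)..t, s ^ p * (t - s) ^ q) : ℝ) : ℂ)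
      = ∫ s in (0:ℝ)..t, ((s:ℂ) ^ (((p+1:ℝ):ℂ) - 1) * (((t:ℝ):ℂ) - s) ^ (((q+1:ℝ):ℂ) - 1)) := by
    rw [← intervalIntegral.integral_ofReal]
    apply intervalIntegral.integral_congr
    intro x hx
    rw [uIcc_of_le ht.le] at hx
    have e1 : ((x:ℂ) ^ (((p+1:ℝ):ℂ) - 1)) = ((x ^ p : ℝ) : ℂ) := by
      rw [show (((p+1:ℝ):ℂ) - 1) = ((p:ℝ):ℂ) from by push_cast; ring,
        ← Complex.ofReal_cpow hx.1]
    have e2 : ((((t:ℝ):ℂ) - (x:ℂ)) ^ (((q+1:ℝ):ℂ) - 1)) = (((t - x) ^ q : ℝ) : ℂ) := by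
      rw [show (((q+1:ℝ):ℂ) - 1) = ((q:ℝ):ℂ) from by push_cast; ring,
          show ((t:ℝ):ℂ) - (x:ℂ) = (((t - x : ℝ)):ℂ) from by push_cast; ring,
          ← Complex.ofReal_cpow (by linarith [hx.2] : (0:ℝ) ≤ t - x)]
    simp only [e1, e2]
    push_cast
    ring
  have hbeta := Complex.Gamma_mul_Gamma_eq_betaIntegral
      (show 0 < Complex.re ((p+1:ℝ):ℂ) by simpa using hp1)
      (show 0 < Complex.re ((q+1:ℝ):ℂ) by simpa using hq1)
  have hscaled := Complex.betaIntegral_scaled ((p+1:ℝ):ℂ) ((q+1:ℝ):ℂ) ht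
  have hsum_eq : (((p+1:ℝ):ℂ) + ((q+1:ℝ):ℂ)) = ((p+q+2 : ℝ):ℂ) := by push_cast; ring
  have hΓne : Complex.Gamma (((p+1:ℝ):ℂ) + ((q+1:ℝ):ℂ)) ≠ 0 := by
    rw [hsum_eq, Complex.Gamma_ofReal]
    simpa using (Real.Gamma_pos_of_pos (show (0:ℝ) < p+q+2 by linarith)).ne'
  have hbi : Complex.betaIntegral ((p+1:ℝ):ℂ) ((q+1:ℝ):ℂ)
      = Complex.Gamma ((p+1:ℝ):ℂ) * Complex.Gamma ((q+1:ℝ):ℂ)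
        / Complex.Gamma (((p+1:ℝ):ℂ) + ((q+1:ℝ):ℂ)) := by
    rw [hbeta, mul_div_cancel_left₀ _ hΓne]
  have main : (((∫ s in (0:ℝ)..t, s ^ p * (t - s) ^ q) : ℝ) : ℂ)
      = ((Real.Gamma (p+1) * Real.Gamma (q+1) / Real.Gamma (p+q+2) * t ^ (p+q+1) : ℝ) : ℂ) := by
    rw [hofreal, hscaled, hbi, hsum_eq,
      show (((p+q+2:ℝ):ℂ) - 1) = ((p+q+1:ℝ):ℂ) from by push_cast; ring,
      ← Complex.ofReal_cpow ht.le, Complex.Gamma_ofReal, Complex.Gamma_ofReal,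
      Complex.Gamma_ofReal]
    push_cast
    ring
  exact_mod_cast main

lemma ML_hasDerivAt {ρ lam c : ℝ} (hρ : 0 < ρ) (hc : 0 < c) (hlam : 0 < lam)
    {s : ℝ} (hs : 0 < s) :
    HasDerivAt (fun σ : ℝ => σ ^ c * ML ρ (c+1) (-lam * σ ^ ρ))
      (s ^ (c-1) * ML ρ c (-lam * s ^ ρ)) s := by
  have hc1 : (0:ℝ) < c + 1 := by linarith
  set a : ℕ → ℝ → ℝ := fun k σ => (-lam) ^ k * σ ^ (ρ * k + c) / Real.Gamma (ρ * k + (c+1))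
    with ha
  set a' : ℕ → ℝ → ℝ := fun k σ => (-lam) ^ k * σ ^ (ρ * k + (c-1)) / Real.Gamma (ρ * k + c)
    with ha'
  have hkey : HasDerivAt (fun σ : ℝ => ∑' k, a k σ) (∑' k, a' k s) s := by
    refine hasDerivAt_of_tendstoLocallyUniformlyOn (l := Filter.atTop) isOpen_Ioi
      (f := fun (n : ℕ) (σ : ℝ) => ∑ k ∈ Finset.range n, a k σ)
      (f' := fun (n : ℕ) (σ : ℝ) => ∑ k ∈ Finset.range n, a' k σ)
      (g' := fun σ => ∑' k, a' k σ) ?tlu ?hd ?hpt hs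
    case hd =>
      apply Filter.Eventually.of_forall
      intro n σ hσ
      apply HasDerivAt.fun_sum
      intro k _
      have hb := Real.hasDerivAt_rpow_const (x := σ) (p := ρ * k + c)
        (Or.inl (ne_of_gt hσ))
      have h2 := hb.const_mul ((-lam) ^ k / Real.Gamma (ρ * k + (c+1)))
      have hpos : 0 < ρ * k + c := by positivity
      have hΓ : Real.Gamma (ρ * k + c + 1) = (ρ * k + c) * Real.Gamma (ρ * k + c) :=
        Real.Gamma_add_one hpos.ne'
      have hΓpos : 0 < Real.Gamma (ρ * k + c) := Real.Gamma_pos_of_pos hpos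
      convert h2 using 1
      · rfl
      · funext y; simp only [ha]; ring
      · simp only [ha']
        rw [show ρ * (k:ℝ) + (c+1) = ρ * k + c + 1 from by ring, hΓ,
          show ρ * (k:ℝ) + (c-1) = ρ * k + c - 1 from by ring]
        field_simp
    case hpt =>
      intro σ hσ
      exact ((ML_summable_terms hρ hc1 c hσ).hasSum.tendsto_sum_nat)
    case tlu =>
      rw [tendstoLocallyUniformlyOn_iff_forall_isCompact isOpen_Ioi]
      intro K hKsub hKc
      rcases K.eq_empty_or_nonempty with hKe | hKne
      · rw [hKe]; exact tendstoUniformlyOn_empty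
      have hε : 0 < sInf K := hKsub (hKc.sInf_mem hKne)
      set ε := sInf K
      set M := sSup K
      have hεM : ε ≤ M := csInf_le_csSup hKne hKc.bddBelow hKc.bddAbove
      have hM : 0 < M := lt_of_lt_of_le hε hεM
      have hKIcc : K ⊆ Set.Icc ε M := fun x hx =>
        ⟨csInf_le hKc.bddBelow hx, le_csSup hKc.bddAbove hx⟩
      set C := max (ε ^ (c-1)) (M ^ (c-1)) with hC
      refine (tendstoUniformlyOn_tsum_nat
        (u := fun k : ℕ => (lam * M ^ ρ) ^ k / Real.Gamma (ρ * k + c) * C)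
        ((ML_summable hρ hc (lam * M ^ ρ)).mul_right C) ?_).mono hKIcc
      intro k σ hσ
      have hσ0 : 0 < σ := lt_of_lt_of_le hε hσ.1
      have hΓpos : 0 < Real.Gamma (ρ * k + c) := Real.Gamma_pos_of_pos (by positivity)
      have h1 : ‖a' k σ‖ = lam ^ k * σ ^ (ρ * k + (c-1)) / Real.Gamma (ρ * k + c) := by
        rw [ha', Real.norm_eq_abs, abs_div, abs_of_pos hΓpos, abs_mul, abs_pow, abs_neg,
          abs_of_pos hlam, abs_of_pos (Real.rpow_pos_of_pos hσ0 _)]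
      rw [h1]
      have hsplit : σ ^ (ρ * (k:ℝ) + (c-1)) = σ ^ (ρ * (k:ℝ)) * σ ^ (c-1) :=
        Real.rpow_add hσ0 _ _
      have hb1 : σ ^ (ρ * (k:ℝ)) ≤ M ^ (ρ * (k:ℝ)) :=
        Real.rpow_le_rpow hσ0.le hσ.2 (by positivity)
      have hb2 : σ ^ (c-1) ≤ C := by
        rcases le_or_gt 0 (c-1) with h | h
        · exact le_max_of_le_right (Real.rpow_le_rpow hσ0.le hσ.2 h)
        · exact le_max_of_le_left (Real.rpow_le_rpow_of_nonpos hε hσ.1 h.le)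
      have hMk : (lam * M ^ ρ) ^ k = lam ^ k * M ^ (ρ * (k:ℝ)) := by
        rw [mul_pow, ← Real.rpow_natCast (M ^ ρ) k, ← Real.rpow_mul hM.le]
      show _ ≤ (lam * M ^ ρ) ^ k / Real.Gamma (ρ * k + c) * C
      rw [hsplit, hMk, div_mul_eq_mul_div, div_le_div_iff_of_pos_right hΓpos]
      calc lam ^ k * (σ ^ (ρ * (k:ℝ)) * σ ^ (c-1))
          ≤ lam ^ k * (M ^ (ρ * (k:ℝ)) * C) := by
            apply mul_le_mul_of_nonneg_left _ (by positivity)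
            exact mul_le_mul hb1 hb2 (Real.rpow_nonneg hσ0.le _) (Real.rpow_nonneg hM.le _)
        _ = lam ^ k * M ^ (ρ * (k:ℝ)) * C := by ring
  have heq : (fun σ : ℝ => σ ^ c * ML ρ (c+1) (-lam * σ ^ ρ))
      =ᶠ[nhds s] (fun σ => ∑' k, a k σ) := by
    filter_upwards [Ioi_mem_nhds hs] with σ hσ
    exact ML_rep c hσ
  rw [show s ^ (c-1) * ML ρ c (-lam * s ^ ρ) = ∑' k, a' k s from ML_rep (c-1) hs]
  exact hkey.congr_of_eventuallyEq heq

lemma ML_key1 {ρ lam t : ℝ} (hρ0 : 0 < ρ) (hρ1 : ρ < 1) (hlam : 0 < lam) (ht : 0 < t) :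
    ∫ s in (0:ℝ)..t, (t - s) ^ (-ρ) * (s ^ (ρ-1) * ML ρ ρ (-lam * s ^ ρ))
      = Real.Gamma (1-ρ) * ML ρ 1 (-lam * t ^ ρ) := by
  set F : ℕ → ℝ → ℝ := fun k s => (-lam) ^ k / Real.Gamma (ρ * k + ρ)
      * (s ^ (ρ * k + (ρ-1)) * (t - s) ^ (-ρ)) with hFdef
  have hp : ∀ k : ℕ, (-1:ℝ) < ρ * k + (ρ-1) := by
    intro k
    have : (0:ℝ) ≤ ρ * k := by positivity
    linarith
  have hq : (-1:ℝ) < -ρ := by linarith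
  have hΓρ : ∀ k : ℕ, (0:ℝ) < Real.Gamma (ρ * k + ρ) := fun k =>
    Real.Gamma_pos_of_pos (by positivity)
  have hΓ1 : ∀ k : ℕ, (0:ℝ) < Real.Gamma (ρ * k + 1) := fun k =>
    Real.Gamma_pos_of_pos (by positivity)
  have hInt : ∀ k : ℕ, IntervalIntegrable (F k) volume 0 t := fun k =>
    (rbeta_int (hp k) hq ht).const_mul _
  have hIval : ∀ k : ℕ, (∫ s in (0:ℝ)..t, F k s)
      = (-lam) ^ k * t ^ (ρ * k) * Real.Gamma (1-ρ) / Real.Gamma (ρ * k + 1) := by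
    intro k
    rw [hFdef]
    rw [intervalIntegral.integral_const_mul, rbeta (hp k) hq ht,
      show ρ * (k:ℝ) + (ρ-1) + 1 = ρ * k + ρ from by ring,
      show -ρ + 1 = 1 - ρ from by ring,
      show ρ * (k:ℝ) + (ρ-1) + -ρ + 2 = ρ * k + 1 from by ring,
      show ρ * (k:ℝ) + (ρ-1) + -ρ + 1 = ρ * k from by ring]
    field_simp
  have hcong : ∀ s ∈ Set.Ioc (0:ℝ) t,
      (t - s) ^ (-ρ) * (s ^ (ρ-1) * ML ρ ρ (-lam * s ^ ρ)) = ∑' k, F k s := by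
    intro s hs
    rw [ML_rep (ρ-1) hs.1, ← tsum_mul_left]
    exact tsum_congr fun k => by rw [hFdef]; ring
  have hrestr : volume.restrict (Set.Ioc (0:ℝ) t) = volume.restrict (Set.Ioo (0:ℝ) t) :=
    (Measure.restrict_congr_set Ioo_ae_eq_Ioc).symm
  have hmeas : ∀ k : ℕ, AEStronglyMeasurable (F k) (volume.restrict (Set.Ioc (0:ℝ) t)) := by
    intro k
    rw [hrestr]
    refine ContinuousOn.aestronglyMeasurable ?_ measurableSet_Ioo
    apply continuousOn_const.mul
    apply ContinuousOn.mul
    · exact continuousOn_id.rpow_const fun x hx => Or.inl (by simp only [id]; exact hx.1.ne')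
    · exact (continuousOn_const.sub continuousOn_id).rpow_const fun x hx =>
        Or.inl (by exact sub_ne_zero_of_ne hx.2.ne')
  set I : ℕ → ℝ := fun k => lam ^ k * t ^ (ρ * k) * Real.Gamma (1-ρ) / Real.Gamma (ρ * k + 1)
    with hIdef
  have hGnn : ∀ k : ℕ, ∀ s ∈ Set.Ioc (0:ℝ) t, ‖F k s‖
      = lam ^ k / Real.Gamma (ρ * k + ρ) * (s ^ (ρ * k + (ρ-1)) * (t - s) ^ (-ρ)) := by
    intro k s hs
    rw [hFdef, Real.norm_eq_abs, abs_mul, abs_div, abs_pow, abs_neg, abs_of_pos hlam,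
      abs_of_pos (hΓρ k), abs_of_nonneg (mul_nonneg (Real.rpow_nonneg hs.1.le _)
        (Real.rpow_nonneg (by linarith [hs.2] : (0:ℝ) ≤ t - s) _))]
  have hIsum : Summable I := by
    refine ((ML_summable hρ0 one_pos (lam * t ^ ρ)).mul_left (Real.Gamma (1-ρ))).congr fun k => ?_
    rw [hIdef]
    have : (lam * t ^ ρ) ^ k = lam ^ k * t ^ (ρ * (k:ℝ)) := by
      rw [mul_pow, ← Real.rpow_natCast (t ^ ρ) k, ← Real.rpow_mul ht.le]
    rw [this]
    ring
  have hlint : ∑' k, ∫⁻ s, ‖F k s‖₊ ∂(volume.restrict (Set.Ioc (0:ℝ) t)) ≠ ⊤ := by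
    have hlk : ∀ k : ℕ, ∫⁻ s, (‖F k s‖₊ : ENNReal) ∂(volume.restrict (Set.Ioc (0:ℝ) t))
        = ENNReal.ofReal (I k) := by
      intro k
      have hFi : Integrable (F k) (volume.restrict (Set.Ioc (0:ℝ) t)) :=
        (intervalIntegrable_iff_integrableOn_Ioc_of_le ht.le).mp (hInt k)
      simp only [← enorm_eq_nnnorm]
      rw [← MeasureTheory.ofReal_integral_norm_eq_lintegral_enorm hFi]
      congr 1
      rw [MeasureTheory.setIntegral_congr_fun measurableSet_Ioc (hGnn k)]
      have : ∫ s in Set.Ioc (0:ℝ) t,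
          (lam ^ k / Real.Gamma (ρ * k + ρ) * (s ^ (ρ * k + (ρ-1)) * (t - s) ^ (-ρ)))
          = ∫ s in (0:ℝ)..t,
          (lam ^ k / Real.Gamma (ρ * k + ρ) * (s ^ (ρ * k + (ρ-1)) * (t - s) ^ (-ρ))) :=
        (intervalIntegral.integral_of_le ht.le).symm
      rw [this, intervalIntegral.integral_const_mul, rbeta (hp k) hq ht,
        show ρ * (k:ℝ) + (ρ-1) + 1 = ρ * k + ρ from by ring,
        show -ρ + 1 = 1 - ρ from by ring,
        show ρ * (k:ℝ) + (ρ-1) + -ρ + 2 = ρ * k + 1 from by ring,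
        show ρ * (k:ℝ) + (ρ-1) + -ρ + 1 = ρ * k from by ring, hIdef]
      field_simp
    rw [tsum_congr hlk, ← ENNReal.ofReal_tsum_of_nonneg (fun k => by
      rw [hIdef]
      have h1 := (Real.Gamma_pos_of_pos (show (0:ℝ) < 1-ρ by linarith)).le
      have h2 := (hΓ1 k)
      positivity) hIsum]
    exact ENNReal.ofReal_ne_top
  rw [intervalIntegral.integral_of_le ht.le,
    MeasureTheory.setIntegral_congr_fun measurableSet_Ioc hcong,
    MeasureTheory.integral_tsum hmeas hlint]
  have hIoc : ∀ k : ℕ, (∫ s in Set.Ioc (0:ℝ) t, F k s)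
      = (-lam) ^ k * t ^ (ρ * k) * Real.Gamma (1-ρ) / Real.Gamma (ρ * k + 1) := fun k => by
    rw [← intervalIntegral.integral_of_le ht.le]; exact hIval k
  rw [tsum_congr hIoc]
  have h0 := ML_rep (ρ := ρ) (lam := lam) (μ := 1) 0 ht
  rw [Real.rpow_zero, one_mul] at h0
  rw [h0, ← tsum_mul_left]
  exact tsum_congr fun k => by rw [add_zero]; ring

set_option maxHeartbeats 2000000 in
lemma ML_le_one {ρ lam : ℝ} (hρ0 : 0 < ρ) (hρ1 : ρ < 1) (hlam : 0 < lam)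
    {t : ℝ} (ht : 0 ≤ t) : ML ρ 1 (-lam * t ^ ρ) ≤ 1 := by
  by_contra hgt
  push_neg at hgt
  set u : ℝ → ℝ := fun s => ML ρ 1 (-lam * s ^ ρ) with hudef
  have hrpow_cont : Continuous fun s : ℝ => s ^ ρ := by
    rw [continuous_iff_continuousAt]
    exact fun x => Real.continuousAt_rpow_const x ρ (Or.inr hρ0.le)
  have hucont : Continuous u :=
    (ML_continuous hρ0 one_pos).comp (continuous_const.mul hrpow_cont)
  have h0ρ : (0:ℝ) ^ ρ = 0 := Real.zero_rpow hρ0.ne'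
  have hu0 : u 0 = 1 := by
    rw [hudef]; simp only [h0ρ, mul_zero, ML_zero, Real.Gamma_one]; norm_num
  have ht0 : 0 < t := by
    rcases eq_or_lt_of_le ht with h | h
    · exfalso
      rw [← h, show -lam * (0:ℝ) ^ ρ = 0 by rw [h0ρ]; ring, ML_zero, Real.Gamma_one] at hgt
      norm_num at hgt
    · exact h
  have huW : ∀ s : ℝ, u s = 1 - lam * (s ^ ρ * ML ρ (ρ+1) (-lam * s ^ ρ)) := by
    intro s
    rw [show u s = ML ρ 1 (-lam * s ^ ρ) from rfl, ML_shift hρ0]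
    ring
  obtain ⟨ε, hε, hball⟩ : ∃ ε > 0, ∀ x : ℝ, |x| < ε → 0 < ML ρ (ρ+1) x := by
    have hml0 : 0 < ML ρ (ρ+1) 0 := by
      rw [ML_zero]
      exact div_pos one_pos (Real.Gamma_pos_of_pos (by linarith))
    have hc := (ML_continuous hρ0 (by linarith : (0:ℝ) < ρ+1)).continuousAt (x := 0)
    rcases Metric.continuousAt_iff.mp hc (ML ρ (ρ+1) 0) hml0 with ⟨δ, hδ, hd⟩
    refine ⟨δ, hδ, fun x hx => ?_⟩
    have h2 := hd (show dist x 0 < δ by simpa [Real.dist_eq] using hx)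
    rw [Real.dist_eq] at h2
    have h3 := abs_lt.mp h2
    linarith [h3.1]
  set δ0 : ℝ := min t ((ε / (2 * lam)) ^ ((1:ℝ)/ρ)) with hδ0def
  have hδ0pos : 0 < δ0 := lt_min ht0 (Real.rpow_pos_of_pos (by positivity) _)
  have hsmall : ∀ s : ℝ, 0 < s → s ≤ δ0 → u s < 1 := by
    intro s hs hsδ
    have hsρ : 0 < s ^ ρ := Real.rpow_pos_of_pos hs _
    have hsle : s ^ ρ ≤ ε / (2 * lam) := by
      have h1 : s ≤ (ε / (2 * lam)) ^ ((1:ℝ)/ρ) := le_trans hsδ (min_le_right _ _)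
      calc s ^ ρ ≤ ((ε / (2 * lam)) ^ ((1:ℝ)/ρ)) ^ ρ := Real.rpow_le_rpow hs.le h1 hρ0.le
        _ = ε / (2 * lam) := by
          rw [← Real.rpow_mul (by positivity), one_div_mul_cancel hρ0.ne', Real.rpow_one]
    have habs : |(-lam * s ^ ρ)| < ε := by
      rw [abs_mul, abs_neg, abs_of_pos hlam, abs_of_pos hsρ]
      calc lam * s ^ ρ ≤ lam * (ε / (2 * lam)) := by nlinarith
        _ = ε / 2 := by field_simp
        _ < ε := by linarith
    have hmlpos := hball _ habs
    rw [huW s]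
    nlinarith [mul_pos (mul_pos hlam hsρ) hmlpos]
  set A : Set ℝ := Set.Icc δ0 t ∩ u ⁻¹' Set.Ici 1 with hAdef
  have hAclosed : IsClosed A := isClosed_Icc.inter (isClosed_Ici.preimage hucont)
  have htA : t ∈ A := ⟨⟨min_le_left _ _, le_refl t⟩, le_of_lt hgt⟩
  have hAne : A.Nonempty := ⟨t, htA⟩
  have hAbdd : BddBelow A := ⟨δ0, fun x hx => hx.1.1⟩
  set τ : ℝ := sInf A with hτdef
  have hτA : τ ∈ A := hAclosed.csInf_mem hAne hAbdd
  have hτδ : δ0 ≤ τ := hτA.1.1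
  have hτt : τ ≤ t := hτA.1.2
  have hτpos : 0 < τ := lt_of_lt_of_le hδ0pos hτδ
  have hlt : ∀ s, 0 < s → s < τ → u s < 1 := by
    intro s hs hsτ
    rcases le_or_gt s δ0 with h | h
    · exact hsmall s hs h
    · by_contra hc
      push_neg at hc
      have hsA : s ∈ A := ⟨⟨h.le, by linarith⟩, hc⟩
      exact absurd (csInf_le hAbdd hsA) (not_le.mpr hsτ)
  have huτ : u τ = 1 := by
    refine le_antisymm ?_ hτA.2
    refine le_of_tendsto ((hucont.continuousAt.continuousWithinAt (s := Set.Iio τ)).tendsto) ?_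
    filter_upwards [Ioo_mem_nhdsLT_of_mem
      (show τ ∈ Set.Ioc (0:ℝ) τ from ⟨hτpos, le_refl τ⟩)] with s hs
    exact (hlt s hs.1 hs.2).le
  have huball : ∀ x ∈ Set.Icc (0:ℝ) τ, u x ≤ 1 := by
    intro x hx
    rcases eq_or_lt_of_le hx.1 with h0 | h0
    · rw [← h0, hu0]
    rcases eq_or_lt_of_le hx.2 with h1 | h1
    · rw [h1, huτ]
    · exact (hlt x h0 h1).le
  -- derivative machinery
  set d : ℝ → ℝ := fun s => -(lam * (s ^ (ρ-1) * ML ρ ρ (-lam * s ^ ρ))) with hddef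
  have hud : ∀ s : ℝ, 0 < s → HasDerivAt u (d s) s := by
    intro s hs
    have h1 := ((ML_hasDerivAt hρ0 hρ0 hlam hs).const_mul lam).const_sub 1
    have h2 : u = fun σ => 1 - lam * (σ ^ ρ * ML ρ (ρ+1) (-lam * σ ^ ρ)) := funext huW
    rw [h2, hddef]
    exact h1
  obtain ⟨B, hB⟩ : ∃ B, ∀ s ∈ Set.Icc (0:ℝ) τ, |ML ρ ρ (-lam * s ^ ρ)| ≤ B := by
    rcases isCompact_Icc.exists_bound_of_continuousOn
      (((ML_continuous hρ0 hρ0).comp (continuous_const.mul hrpow_cont)).continuousOn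
        (s := Set.Icc (0:ℝ) τ)) with ⟨B, hBb⟩
    exact ⟨B, fun s hs => by have := hBb s hs; rwa [Real.norm_eq_abs] at this⟩
  have hB0 : 0 ≤ B := le_trans (abs_nonneg _) (hB 0 ⟨le_refl 0, hτpos.le⟩)
  have hdcont : ∀ S : Set ℝ, (∀ x ∈ S, (0:ℝ) < x) → ContinuousOn d S := by
    intro S hS
    rw [hddef]
    apply ContinuousOn.neg
    apply continuousOn_const.mul
    apply ContinuousOn.mul
    · exact continuousOn_id.rpow_const fun x hx => Or.inl
        (by simp only [id]; exact (hS x hx).ne')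
    · exact ((ML_continuous hρ0 hρ0).comp (continuous_const.mul hrpow_cont)).continuousOn
  obtain ⟨L, hL0, hLip⟩ : ∃ L, 0 ≤ L ∧ ∀ s ∈ Set.Icc (τ/2) τ, |u s - u τ| ≤ L * (τ - s) := by
    rcases isCompact_Icc.exists_bound_of_continuousOn
      (hdcont (Set.Icc (τ/2) τ) (fun x hx => by nlinarith [hx.1])) with ⟨L0, hL0b⟩
    refine ⟨max L0 0, le_max_right _ _, fun s hs => ?_⟩
    have key := (convex_Icc (τ/2) τ).norm_image_sub_le_of_norm_hasDerivWithin_le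
      (f := u) (f' := d) (C := max L0 0)
      (fun x hx => (hud x (by nlinarith [hx.1] : (0:ℝ) < x)).hasDerivWithinAt)
      (fun x hx => le_trans (hL0b x hx) (le_max_left _ _))
      (Set.right_mem_Icc.mpr (by linarith)) hs
    rw [Real.norm_eq_abs, Real.norm_eq_abs] at key
    calc |u s - u τ| ≤ max L0 0 * |s - τ| := key
      _ = max L0 0 * (τ - s) := by rw [abs_sub_comm, abs_of_nonneg (by linarith [hs.2])]
  set v : ℝ → ℝ := fun s => (τ - s) ^ (-ρ) * (u s - u τ) with hvdef
  set w : ℝ → ℝ := fun s => ρ * (τ - s) ^ (-ρ-1) * (u s - u τ) + (τ - s) ^ (-ρ) * d s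
    with hwdef
  have hvτ : v τ = 0 := by
    rw [hvdef]; simp [sub_self, Real.zero_rpow (show -ρ ≠ 0 by simpa using hρ0.ne')]
  have hv0 : v 0 = 0 := by rw [hvdef]; simp [huτ, hu0]
  have hvcont : ContinuousOn v (Set.Icc 0 τ) := by
    intro x hx
    rcases eq_or_lt_of_le hx.2 with hxτ | hxτ
    · rw [hxτ]
      show Filter.Tendsto v (nhdsWithin τ (Set.Icc 0 τ)) (nhds (v τ))
      rw [hvτ]
      have hbound : ∀ᶠ s in nhdsWithin τ (Set.Icc 0 τ),
          ‖v s‖ ≤ L * (τ - s) ^ (1-ρ) := by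
        filter_upwards [self_mem_nhdsWithin,
          mem_nhdsWithin_of_mem_nhds (Ici_mem_nhds (show τ/2 < τ by linarith))]
          with s hs1 hs2
        have hτs : (0:ℝ) ≤ τ - s := by linarith [hs1.2]
        have h1 : |u s - u τ| ≤ L * (τ - s) := hLip s ⟨hs2, hs1.2⟩
        rw [Real.norm_eq_abs]
        simp only [hvdef]
        rw [abs_mul, abs_of_nonneg (Real.rpow_nonneg hτs _)]
        calc (τ - s) ^ (-ρ) * |u s - u τ| ≤ (τ - s) ^ (-ρ) * (L * (τ - s)) :=
              mul_le_mul_of_nonneg_left h1 (Real.rpow_nonneg hτs _)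
          _ = L * ((τ - s) ^ (-ρ) * (τ - s) ^ (1:ℝ)) := by rw [Real.rpow_one]; ring
          _ = L * (τ - s) ^ (1-ρ) := by
              rw [← Real.rpow_add' hτs (show -ρ + 1 ≠ 0 by intro h; linarith),
                show -ρ + 1 = 1 - ρ from by ring]
      have htendb : Filter.Tendsto (fun s : ℝ => L * (τ - s) ^ (1-ρ))
          (nhdsWithin τ (Set.Icc 0 τ)) (nhds 0) := by
        have h1 : ContinuousAt (fun s : ℝ => L * (τ - s) ^ (1-ρ)) τ := by
          apply ContinuousAt.mul continuousAt_const
          exact ContinuousAt.rpow_const ((continuous_const.sub continuous_id).continuousAt)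
            (Or.inr (by linarith))
        have h2 := (h1.continuousWithinAt (s := Set.Icc 0 τ)).tendsto
        simpa [sub_self, Real.zero_rpow (show (1:ℝ)-ρ ≠ 0 by intro h; linarith)] using h2
      exact squeeze_zero_norm' hbound htendb
    · have h1 : ContinuousAt (fun s : ℝ => (τ - s) ^ (-ρ)) x :=
        ContinuousAt.rpow_const ((continuous_const.sub continuous_id).continuousAt)
          (Or.inl (show τ - x ≠ 0 from (by linarith : (0:ℝ) < τ - x).ne'))
      exact ((h1.mul ((hucont.sub continuous_const).continuousAt)).continuousWithinAt)
  have hvd : ∀ x ∈ Set.Ioo (0:ℝ) τ, HasDerivAt v (w x) x := by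
    intro x hx
    have hτx : 0 < τ - x := by linarith [hx.2]
    have hin : HasDerivAt (fun s : ℝ => τ - s) (-1) x := (hasDerivAt_id x).const_sub τ
    have h1 := hin.rpow_const (p := -ρ) (Or.inl hτx.ne')
    have h2 : HasDerivAt (fun s => u s - u τ) (d x) x := (hud x hx.1).sub_const (u τ)
    have h3 := h1.mul h2
    simp only [hvdef, hwdef]
    convert h3 using 1
    · rfl
    · rfl
    · rfl
    ring
  have hrestr2 : ∀ a b : ℝ, volume.restrict (Set.Ioc a b) = volume.restrict (Set.Ioo a b) :=
    fun a b => (Measure.restrict_congr_set Ioo_ae_eq_Ioc).symm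
  have hIntA : IntervalIntegrable (fun s => (τ - s) ^ (-ρ) * d s) volume 0 τ := by
    rw [intervalIntegrable_iff_integrableOn_Ioc_of_le hτpos.le]
    have hdom : IntegrableOn (fun s => lam * B * (s ^ (ρ-1) * (τ - s) ^ (-ρ)))
        (Set.Ioc 0 τ) volume := by
      rw [← intervalIntegrable_iff_integrableOn_Ioc_of_le hτpos.le]
      exact ((rbeta_int (by linarith) (by linarith) hτpos).const_mul (lam * B))
    apply Integrable.mono' hdom
    · rw [hrestr2]
      refine ContinuousOn.aestronglyMeasurable ?_ measurableSet_Ioo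
      apply ContinuousOn.mul
      · exact (continuousOn_const.sub continuousOn_id).rpow_const fun x hx =>
          Or.inl (by simp only [Pi.sub_apply, id]; exact (sub_pos.mpr hx.2).ne')
      · exact hdcont _ (fun x hx => hx.1)
    · rw [ae_restrict_iff' measurableSet_Ioc]
      apply Filter.Eventually.of_forall
      intro s hs
      have hs0 : (0:ℝ) < s := hs.1
      have hτs : (0:ℝ) ≤ τ - s := by linarith [hs.2]
      have h1 : (0:ℝ) ≤ s ^ (ρ-1) := Real.rpow_nonneg hs0.le _
      have h2 : (0:ℝ) ≤ (τ - s) ^ (-ρ) := Real.rpow_nonneg hτs _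
      rw [Real.norm_eq_abs]
      simp only [hddef]
      rw [abs_mul, abs_of_nonneg h2, abs_neg, abs_mul, abs_of_pos hlam, abs_mul,
        abs_of_nonneg h1]
      have hMLb := hB s ⟨hs0.le, hs.2⟩
      have h3 : (0:ℝ) ≤ lam * (s ^ (ρ-1) * (τ - s) ^ (-ρ)) :=
        mul_nonneg hlam.le (mul_nonneg h1 h2)
      nlinarith [mul_le_mul_of_nonneg_left hMLb h3]
  have hIntB : IntervalIntegrable (fun s => ρ * (τ - s) ^ (-ρ-1) * (u s - u τ)) volume 0 τ := by
    have hB1 : IntervalIntegrable (fun s => ρ * (τ - s) ^ (-ρ-1) * (u s - u τ))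
        volume 0 (τ/2) := by
      apply ContinuousOn.intervalIntegrable
      rw [uIcc_of_le (by linarith : (0:ℝ) ≤ τ/2)]
      apply ContinuousOn.mul
      · apply continuousOn_const.mul
        exact (continuousOn_const.sub continuousOn_id).rpow_const fun x hx =>
          Or.inl (by simp only [Pi.sub_apply, id]; nlinarith [hx.2])
      · exact (hucont.sub continuous_const).continuousOn
    have hB2 : IntervalIntegrable (fun s => ρ * (τ - s) ^ (-ρ-1) * (u s - u τ))
        volume (τ/2) τ := by
      rw [intervalIntegrable_iff_integrableOn_Ioc_of_le (by linarith : τ/2 ≤ τ)]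
      have hbase : IntervalIntegrable (fun x : ℝ => x ^ (-ρ)) volume 0 (τ/2) :=
        intervalIntegral.intervalIntegrable_rpow' (by linarith)
      have hcomp := (hbase.comp_sub_left τ).symm
      rw [sub_zero, show τ - τ/2 = τ/2 from by ring] at hcomp
      have hdom : IntegrableOn (fun s => ρ * L * (τ - s) ^ (-ρ)) (Set.Ioc (τ/2) τ) volume := by
        rw [← intervalIntegrable_iff_integrableOn_Ioc_of_le (by linarith : τ/2 ≤ τ)]
        exact hcomp.const_mul (ρ * L)
      apply Integrable.mono' hdom
      · rw [hrestr2]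
        refine ContinuousOn.aestronglyMeasurable ?_ measurableSet_Ioo
        apply ContinuousOn.mul
        · apply continuousOn_const.mul
          exact (continuousOn_const.sub continuousOn_id).rpow_const fun x hx =>
            Or.inl (by simp only [Pi.sub_apply, id]; exact (sub_pos.mpr hx.2).ne')
        · exact (hucont.sub continuous_const).continuousOn
      · rw [ae_restrict_iff' measurableSet_Ioc]
        apply Filter.Eventually.of_forall
        intro s hs
        have hτs : (0:ℝ) ≤ τ - s := by linarith [hs.2]
        have h1 : |u s - u τ| ≤ L * (τ - s) := hLip s ⟨hs.1.le, hs.2⟩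
        rw [Real.norm_eq_abs, abs_mul, abs_mul, abs_of_pos hρ0,
          abs_of_nonneg (Real.rpow_nonneg hτs _)]
        calc ρ * (τ - s) ^ (-ρ-1) * |u s - u τ|
            ≤ ρ * (τ - s) ^ (-ρ-1) * (L * (τ - s)) := by
              apply mul_le_mul_of_nonneg_left h1
              exact mul_nonneg hρ0.le (Real.rpow_nonneg hτs _)
          _ = ρ * L * ((τ - s) ^ (-ρ-1) * (τ - s) ^ (1:ℝ)) := by rw [Real.rpow_one]; ring
          _ = ρ * L * (τ - s) ^ (-ρ) := by
              rw [← Real.rpow_add' hτs (show -ρ-1 + 1 ≠ 0 by intro h; linarith)]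
              norm_num
    exact hB1.trans hB2
  have hwint : IntervalIntegrable w volume 0 τ := hIntB.add hIntA
  have hFTC := intervalIntegral.integral_eq_sub_of_hasDeriv_right_of_le hτpos.le hvcont
    (fun x hx => (hvd x hx).hasDerivWithinAt) hwint
  rw [hvτ, hv0, sub_zero] at hFTC
  have hsplit2 : (∫ s in (0:ℝ)..τ, w s)
      = (∫ s in (0:ℝ)..τ, ρ * (τ - s) ^ (-ρ-1) * (u s - u τ))
        + ∫ s in (0:ℝ)..τ, (τ - s) ^ (-ρ) * d s := by
    simp only [hwdef]
    rw [← intervalIntegral.integral_add hIntB hIntA]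
  have huτ' : ML ρ 1 (-lam * τ ^ ρ) = 1 := huτ
  have hAeval : (∫ s in (0:ℝ)..τ, (τ - s) ^ (-ρ) * d s) = -(lam * Real.Gamma (1-ρ)) := by
    have heq : (fun s => (τ - s) ^ (-ρ) * d s)
        = fun s => -lam * ((τ - s) ^ (-ρ) * (s ^ (ρ-1) * ML ρ ρ (-lam * s ^ ρ))) := by
      funext s; simp only [hddef]; ring
    rw [heq, intervalIntegral.integral_const_mul, ML_key1 hρ0 hρ1 hlam hτpos, huτ']
    ring
  have hBeval : (∫ s in (0:ℝ)..τ, ρ * (τ - s) ^ (-ρ-1) * (u s - u τ))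
      = lam * Real.Gamma (1-ρ) := by
    rw [hsplit2, hAeval] at hFTC
    linarith
  have hptwise : ∀ x ∈ Set.Icc (0:ℝ) τ, 0 ≤ -(ρ * (τ - x) ^ (-ρ-1) * (u x - u τ)) := by
    intro x hx
    have h1 : (0:ℝ) ≤ ρ * (τ - x) ^ (-ρ-1) :=
      mul_nonneg hρ0.le (Real.rpow_nonneg (by linarith [hx.2]) _)
    have h2 : u x - u τ ≤ 0 := by
      have := huball x hx
      rw [huτ]; linarith
    nlinarith
  have hnn := intervalIntegral.integral_nonneg (μ := volume) hτpos.le hptwise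
  rw [intervalIntegral.integral_neg] at hnn
  have hΓpos : 0 < Real.Gamma (1-ρ) := Real.Gamma_pos_of_pos (by linarith)
  nlinarith [mul_pos hlam hΓpos]

lemma ML_rho1_nonneg {ρ lam : ℝ} (hρ0 : 0 < ρ) (hρ1 : ρ < 1) (hlam : 0 < lam)
    {s : ℝ} (hs : 0 ≤ s) : 0 ≤ ML ρ (ρ+1) (-lam * s ^ ρ) := by
  rcases eq_or_lt_of_le hs with h | h
  · rw [← h, Real.zero_rpow hρ0.ne', mul_zero, ML_zero]
    exact le_of_lt (div_pos one_pos (Real.Gamma_pos_of_pos (by linarith)))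
  · have h1 := ML_le_one hρ0 hρ1 hlam hs
    rw [ML_shift hρ0] at h1
    have hsρ : 0 < s ^ ρ := Real.rpow_pos_of_pos h _
    by_contra hX
    push_neg at hX
    nlinarith [mul_pos (mul_pos hlam hsρ) (neg_pos.mpr hX)]


set_option maxHeartbeats 1000000 in
theorem b_integration_by_parts (ρ T t₀ : ℝ) (hρ : ρ ∈ Set.Ioo (0:ℝ) 1)
    (ht₀ : 0 < t₀) (ht₀T : t₀ ≤ T) (g g' : ℝ → ℝ) (lam : ℝ) (hlam : 0 < lam)
    (hderiv : ∀ s ∈ Set.Icc (0:ℝ) T, HasDerivAt g (g' s) s)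
    (hg' : ContinuousOn g' (Set.Icc 0 T))
    (hg0 : g 0 ≠ 0) :
    ∃ ξ ∈ Set.Icc (0:ℝ) t₀,
      (∫ s in (0:ℝ)..t₀, g (t₀ - s) * s ^ (ρ - 1) * ML ρ ρ (-lam * s ^ ρ))
        = g 0 * t₀ ^ ρ * ML ρ (ρ + 1) (-lam * t₀ ^ ρ)
          + g' ξ * t₀ ^ (ρ + 1) * ML ρ (ρ + 2) (-lam * t₀ ^ ρ) := by
  obtain ⟨hρ0, hρ1⟩ := hρ
  have hrpow_cont : Continuous fun s : ℝ => s ^ ρ := by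
    rw [continuous_iff_continuousAt]
    exact fun x => Real.continuousAt_rpow_const x ρ (Or.inr hρ0.le)
  have hmap : ∀ s ∈ Set.Icc (0:ℝ) t₀, t₀ - s ∈ Set.Icc (0:ℝ) T := fun s hs =>
    ⟨by linarith [hs.2], by linarith [hs.1]⟩
  have hgc : ContinuousOn g (Set.Icc 0 T) := fun x hx =>
    ((hderiv x hx).continuousAt).continuousWithinAt
  set W₁ : ℝ → ℝ := fun s => s ^ ρ * ML ρ (ρ+1) (-lam * s ^ ρ) with hW₁
  set W₂ : ℝ → ℝ := fun s => s ^ (ρ+1) * ML ρ (ρ+2) (-lam * s ^ ρ) with hW₂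
  have hW₁cont : Continuous W₁ := hrpow_cont.mul
    ((ML_continuous hρ0 (by linarith)).comp (continuous_const.mul hrpow_cont))
  have hW₂cont : Continuous W₂ := by
    have h1 : Continuous fun s : ℝ => s ^ (ρ+1) := by
      rw [continuous_iff_continuousAt]
      exact fun x => Real.continuousAt_rpow_const x (ρ+1) (Or.inr (by linarith))
    exact h1.mul ((ML_continuous hρ0 (by linarith)).comp (continuous_const.mul hrpow_cont))
  have hW₁0 : W₁ 0 = 0 := by simp [hW₁, Real.zero_rpow hρ0.ne']
  have hW₁d : ∀ s ∈ Set.Ioo (0:ℝ) t₀, HasDerivAt W₁ (s ^ (ρ-1) * ML ρ ρ (-lam * s ^ ρ)) s :=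
    fun s hs => ML_hasDerivAt hρ0 hρ0 hlam hs.1
  have hW₂d : ∀ s ∈ Set.Ioo (0:ℝ) t₀, HasDerivAt W₂ (W₁ s) s := by
    intro s hs
    have h := ML_hasDerivAt (c := ρ+1) hρ0 (by linarith) hlam hs.1
    rw [show ρ+1+1 = ρ+2 from by ring, show ρ+1-1 = ρ from by ring] at h
    exact h
  obtain ⟨B, hB0, hB⟩ : ∃ B, 0 ≤ B ∧ ∀ s ∈ Set.Icc (0:ℝ) t₀, |ML ρ ρ (-lam * s ^ ρ)| ≤ B := by
    rcases isCompact_Icc.exists_bound_of_continuousOn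
      (((ML_continuous hρ0 hρ0).comp (continuous_const.mul hrpow_cont)).continuousOn
        (s := Set.Icc (0:ℝ) t₀)) with ⟨B, hBb⟩
    refine ⟨B, ?_, fun s hs => by have := hBb s hs; rwa [Real.norm_eq_abs] at this⟩
    have := hBb 0 ⟨le_refl 0, ht₀.le⟩
    rw [Real.norm_eq_abs] at this
    exact le_trans (abs_nonneg _) this
  obtain ⟨G, hG0, hG⟩ : ∃ G, 0 ≤ G ∧ ∀ x ∈ Set.Icc (0:ℝ) T, |g x| ≤ G := by
    rcases isCompact_Icc.exists_bound_of_continuousOn hgc with ⟨G, hGb⟩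
    have h0T : (0:ℝ) ∈ Set.Icc (0:ℝ) T := ⟨le_refl 0, by linarith⟩
    refine ⟨G, ?_, fun x hx => by have := hGb x hx; rwa [Real.norm_eq_abs] at this⟩
    have := hGb 0 h0T
    rw [Real.norm_eq_abs] at this
    exact le_trans (abs_nonneg _) this
  have hgcomp : ContinuousOn (fun s : ℝ => g (t₀ - s)) (Set.Icc 0 t₀) :=
    hgc.comp (continuous_const.sub continuous_id).continuousOn fun x hx => hmap x hx
  have hI1 : IntervalIntegrable (fun s => g (t₀ - s) * (s ^ (ρ-1) * ML ρ ρ (-lam * s ^ ρ)))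
      volume 0 t₀ := by
    rw [intervalIntegrable_iff_integrableOn_Ioc_of_le ht₀.le]
    have hdom : IntegrableOn (fun s : ℝ => G * B * s ^ (ρ-1)) (Set.Ioc 0 t₀) volume := by
      rw [← intervalIntegrable_iff_integrableOn_Ioc_of_le ht₀.le]
      exact (intervalIntegral.intervalIntegrable_rpow' (by linarith)).const_mul _
    apply Integrable.mono' hdom
    · rw [(Measure.restrict_congr_set Ioo_ae_eq_Ioc).symm]
      refine ContinuousOn.aestronglyMeasurable ?_ measurableSet_Ioo
      apply ContinuousOn.mul
      · exact hgcomp.mono Set.Ioo_subset_Icc_self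
      · apply ContinuousOn.mul
        · exact continuousOn_id.rpow_const fun x hx => Or.inl (by simp only [id]; exact hx.1.ne')
        · exact ((ML_continuous hρ0 hρ0).comp (continuous_const.mul hrpow_cont)).continuousOn
    · rw [ae_restrict_iff' measurableSet_Ioc]
      refine Filter.Eventually.of_forall fun s hs => ?_
      have h1 : (0:ℝ) ≤ s ^ (ρ-1) := Real.rpow_nonneg hs.1.le _
      rw [Real.norm_eq_abs, abs_mul, abs_mul, abs_of_nonneg h1]
      have e1 : |g (t₀ - s)| ≤ G := hG _ (hmap s ⟨hs.1.le, hs.2⟩)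
      have e2 : |ML ρ ρ (-lam * s ^ ρ)| ≤ B := hB s ⟨hs.1.le, hs.2⟩
      have e3 : |g (t₀ - s)| * |ML ρ ρ (-lam * s ^ ρ)| ≤ G * B :=
        mul_le_mul e1 e2 (abs_nonneg _) hG0
      nlinarith [mul_le_mul_of_nonneg_right e3 h1, abs_nonneg (g (t₀ - s)),
        abs_nonneg (ML ρ ρ (-lam * s ^ ρ))]
  have hubW : ∀ s ∈ Set.Icc (0:ℝ) t₀, 0 ≤ W₁ s := fun s hs =>
    mul_nonneg (Real.rpow_nonneg hs.1 _) (ML_rho1_nonneg hρ0 hρ1 hlam hs.1)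
  have hg'to : ContinuousOn (fun s : ℝ => g' (t₀ - s)) (Set.Icc 0 t₀) :=
    hg'.comp (continuous_const.sub continuous_id).continuousOn fun x hx => hmap x hx
  have hI2 : IntervalIntegrable (fun s => g' (t₀ - s) * W₁ s) volume 0 t₀ := by
    apply ContinuousOn.intervalIntegrable
    rw [uIcc_of_le ht₀.le]
    exact hg'to.mul hW₁cont.continuousOn
  have hW₁int : IntervalIntegrable W₁ volume 0 t₀ := hW₁cont.intervalIntegrable 0 t₀
  set P : ℝ → ℝ := fun s => g (t₀ - s) * W₁ s with hP
  have hPcont : ContinuousOn P (Set.Icc 0 t₀) := hgcomp.mul hW₁cont.continuousOn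
  have hPd : ∀ s ∈ Set.Ioo (0:ℝ) t₀, HasDerivAt P
      (-g' (t₀ - s) * W₁ s + g (t₀ - s) * (s ^ (ρ-1) * ML ρ ρ (-lam * s ^ ρ))) s := by
    intro s hs
    have hgs : HasDerivAt (fun x : ℝ => g (t₀ - x)) (-g' (t₀ - s)) s := by
      have hinner : HasDerivAt (fun x : ℝ => t₀ - x) (-1) s := (hasDerivAt_id s).const_sub t₀
      have houter : HasDerivAt g (g' (t₀ - s)) (t₀ - s) :=
        hderiv _ (hmap s (Set.Ioo_subset_Icc_self hs))
      have h := HasDerivAt.comp s houter hinner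
      convert h using 1
      · rfl
      · rfl
      · rfl
      ring
    have h := hgs.mul (hW₁d s hs)
    exact h
  have hPint : IntervalIntegrable (fun s => -g' (t₀ - s) * W₁ s
      + g (t₀ - s) * (s ^ (ρ-1) * ML ρ ρ (-lam * s ^ ρ))) volume 0 t₀ := by
    apply IntervalIntegrable.add _ hI1
    simpa [neg_mul, Pi.neg_def] using hI2.neg
  have hFTC1 := intervalIntegral.integral_eq_sub_of_hasDeriv_right_of_le ht₀.le hPcont
    (fun x hx => (hPd x hx).hasDerivWithinAt) hPint
  have hPt₀ : P t₀ = g 0 * W₁ t₀ := by simp only [hP, sub_self]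
  have hP0 : P 0 = 0 := by simp only [hP, sub_zero, hW₁0, mul_zero]
  rw [hPt₀, hP0, sub_zero] at hFTC1
  set J : ℝ := ∫ s in (0:ℝ)..t₀, g' (t₀ - s) * W₁ s with hJ
  have hsplitP : (∫ s in (0:ℝ)..t₀, (-g' (t₀ - s) * W₁ s
      + g (t₀ - s) * (s ^ (ρ-1) * ML ρ ρ (-lam * s ^ ρ))))
      = -J + ∫ s in (0:ℝ)..t₀, g (t₀ - s) * (s ^ (ρ-1) * ML ρ ρ (-lam * s ^ ρ)) := by
    have hneg : IntervalIntegrable (fun s => -g' (t₀ - s) * W₁ s) volume 0 t₀ := by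
      simpa [neg_mul, Pi.neg_def] using hI2.neg
    rw [intervalIntegral.integral_add hneg hI1]
    congr 1
    have heq : (fun s => -g' (t₀ - s) * W₁ s) = fun s => -(g' (t₀ - s) * W₁ s) := by
      funext s; ring
    rw [heq, intervalIntegral.integral_neg, hJ]
  have hC : (∫ s in (0:ℝ)..t₀, W₁ s) = W₂ t₀ := by
    have h := intervalIntegral.integral_eq_sub_of_hasDeriv_right_of_le ht₀.le
      hW₂cont.continuousOn (fun x hx => (hW₂d x hx).hasDerivWithinAt) hW₁int
    have hW₂0 : W₂ 0 = 0 := by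
      simp [hW₂, Real.zero_rpow (show ρ+1 ≠ 0 by linarith)]
    rw [hW₂0, sub_zero] at h
    exact h
  have hg'Icc : ContinuousOn g' (Set.Icc 0 t₀) :=
    hg'.mono fun x hx => ⟨hx.1, le_trans hx.2 ht₀T⟩
  obtain ⟨ξ₁, hξ₁mem, hξ₁'⟩ :=
    isCompact_Icc.exists_isMinOn (Set.nonempty_Icc.mpr ht₀.le) hg'Icc
  obtain ⟨ξ₂, hξ₂mem, hξ₂'⟩ :=
    isCompact_Icc.exists_isMaxOn (Set.nonempty_Icc.mpr ht₀.le) hg'Icc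
  have hξ₁ : ∀ y ∈ Set.Icc (0:ℝ) t₀, g' ξ₁ ≤ g' y := fun y hy => hξ₁' hy
  have hξ₂ : ∀ y ∈ Set.Icc (0:ℝ) t₀, g' y ≤ g' ξ₂ := fun y hy => hξ₂' hy
  have hJlow : g' ξ₁ * W₂ t₀ ≤ J := by
    have h1 : ∀ s ∈ Set.Icc (0:ℝ) t₀, 0 ≤ g' (t₀ - s) * W₁ s - g' ξ₁ * W₁ s := by
      intro s hs
      have hW := hubW s hs
      have hle : g' ξ₁ ≤ g' (t₀ - s) := hξ₁ _ ⟨by linarith [hs.2], by linarith [hs.1]⟩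
      nlinarith
    have h2 := intervalIntegral.integral_nonneg (μ := volume) ht₀.le h1
    rw [intervalIntegral.integral_sub hI2 (hW₁int.const_mul _),
      intervalIntegral.integral_const_mul, hC] at h2
    rw [hJ]
    linarith
  have hJhigh : J ≤ g' ξ₂ * W₂ t₀ := by
    have h1 : ∀ s ∈ Set.Icc (0:ℝ) t₀, 0 ≤ g' ξ₂ * W₁ s - g' (t₀ - s) * W₁ s := by
      intro s hs
      have hW := hubW s hs
      have hle : g' (t₀ - s) ≤ g' ξ₂ := hξ₂ _ ⟨by linarith [hs.2], by linarith [hs.1]⟩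
      nlinarith
    have h2 := intervalIntegral.integral_nonneg (μ := volume) ht₀.le h1
    rw [intervalIntegral.integral_sub (hW₁int.const_mul _) hI2,
      intervalIntegral.integral_const_mul, hC] at h2
    rw [hJ]
    linarith
  have hsub : Set.uIcc ξ₁ ξ₂ ⊆ Set.Icc 0 t₀ := by
    rw [← Set.uIcc_of_le ht₀.le]
    exact Set.uIcc_subset_uIcc (by rw [Set.uIcc_of_le ht₀.le]; exact hξ₁mem)
      (by rw [Set.uIcc_of_le ht₀.le]; exact hξ₂mem)
  have hcontξ : ContinuousOn (fun ξ => g' ξ * W₂ t₀) (Set.uIcc ξ₁ ξ₂) :=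
    (hg'Icc.mono hsub).mul continuousOn_const
  have hJmem : J ∈ Set.uIcc (g' ξ₁ * W₂ t₀) (g' ξ₂ * W₂ t₀) := by
    rw [Set.mem_uIcc]
    left
    exact ⟨hJlow, hJhigh⟩
  obtain ⟨ξ, hξu, hξeq⟩ := intermediate_value_uIcc hcontξ hJmem
  refine ⟨ξ, hsub hξu, ?_⟩
  have hIgoal : (∫ s in (0:ℝ)..t₀, g (t₀ - s) * s ^ (ρ - 1) * ML ρ ρ (-lam * s ^ ρ))
      = ∫ s in (0:ℝ)..t₀, g (t₀ - s) * (s ^ (ρ-1) * ML ρ ρ (-lam * s ^ ρ)) := by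
    apply intervalIntegral.integral_congr
    intro x hx
    show g (t₀ - x) * x ^ (ρ - 1) * ML ρ ρ (-lam * x ^ ρ)
      = g (t₀ - x) * (x ^ (ρ-1) * ML ρ ρ (-lam * x ^ ρ))
    ring
  rw [hIgoal]
  have hfinal : (∫ s in (0:ℝ)..t₀, g (t₀ - s) * (s ^ (ρ-1) * ML ρ ρ (-lam * s ^ ρ)))
      = g 0 * W₁ t₀ + J := by
    rw [hsplitP] at hFTC1
    linarith
  rw [hfinal, ← hξeq]
  simp only [hW₁, hW₂]
  ring
end

section
/- For ρ ∈ (0,1) and λ > 0, the function y(t) = E_ρ(-λ t^ρ) satisfies the fractional differential equation D^ρ y(t) = -λ y(t) for t > 0 with y(0) = 1, where D^ρ is the Caputo derivative of order ρ. -/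
/-- The Caputo fractional derivative of order ρ. -/
noncomputable def caputo (ρ : ℝ) (h : ℝ → ℝ) (t : ℝ) : ℝ :=
  (1 / Real.Gamma (1 - ρ)) * ∫ s in (0:ℝ)..t, (t - s) ^ (-ρ) * deriv h s

open Real Set MeasureTheory intervalIntegral

/-- Core summability: factorial-type decay of `1/Γ(a k + b)` beats any geometric. -/
lemma summable_gamma_core {a b c : ℝ} (ha : 0 < a) (hb : 2 ≤ b) (hc : 0 ≤ c) :
    Summable (fun k : ℕ => ((k : ℝ) + 1) * c ^ k / Real.Gamma (a * k + b)) := by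
  obtain ⟨M, hM1, hMa⟩ : ∃ M : ℝ, 1 ≤ M ∧ 2 * c + 1 ≤ M ^ a := by
    refine ⟨(2 * c + 1) ^ a⁻¹ + 1, ?_, ?_⟩
    · have : (0:ℝ) ≤ (2 * c + 1) ^ a⁻¹ := Real.rpow_nonneg (by linarith) _
      linarith
    · calc 2 * c + 1 = ((2 * c + 1) ^ a⁻¹) ^ a := by
            rw [← Real.rpow_mul (by linarith), inv_mul_cancel₀ ha.ne', Real.rpow_one]
        _ ≤ ((2 * c + 1) ^ a⁻¹ + 1) ^ a :=
            Real.rpow_le_rpow (Real.rpow_nonneg (by linarith) _) (by linarith) ha.le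
  have hM0 : 0 < M := by linarith
  have hMapos : 0 < M ^ a := Real.rpow_pos_of_pos hM0 a
  set r : ℝ := c / M ^ a with hr
  have hr0 : 0 ≤ r := div_nonneg hc hMapos.le
  have hr1 : r < 1 := by
    rw [hr, div_lt_one hMapos]; linarith
  -- bound for M^n / n!
  set C : ℝ := ∑' n : ℕ, M ^ n / (n.factorial : ℝ) with hC
  have hCsum := Real.summable_pow_div_factorial M
  have hCle : ∀ n : ℕ, M ^ n / (n.factorial : ℝ) ≤ C := fun n =>
    Summable.le_tsum hCsum n (fun m _ => by positivity)
  have hC0 : 0 < C := lt_of_lt_of_le (by norm_num) (hCle 0)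
  -- summable majorant
  have hmaj : Summable (fun k : ℕ => C * M ^ (2 - b) * (((k:ℝ) + 1) * r ^ k)) := by
    apply Summable.mul_left
    have h1 : Summable (fun k : ℕ => (k:ℝ) * r ^ k) := by
      simpa using summable_pow_mul_geometric_of_norm_lt_one 1 (r := r) (by
        rwa [Real.norm_eq_abs, abs_of_nonneg hr0])
    have h2 : Summable (fun k : ℕ => r ^ k) := summable_geometric_of_lt_one hr0 hr1
    simpa [add_mul] using h1.add h2
  refine Summable.of_nonneg_of_le (fun k => ?_) (fun k => ?_) hmaj
  · have hG : 0 < Real.Gamma (a * k + b) :=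
      Real.Gamma_pos_of_pos (by positivity)
    positivity
  · -- main estimate
    have hs2 : (2:ℝ) ≤ a * k + b := by nlinarith [Nat.cast_nonneg (α := ℝ) k]
    have hspos : (0:ℝ) < a * k + b := by linarith
    set s : ℝ := a * k + b with hsdef
    set m : ℕ := ⌊s⌋₊ with hm
    have hm2 : 2 ≤ m := Nat.le_floor (by exact_mod_cast hs2)
    have hms : (m : ℝ) ≤ s := Nat.floor_le hspos.le
    have hsm : s < (m : ℝ) + 1 := Nat.lt_floor_add_one s
    have hGm : Real.Gamma (m : ℝ) ≤ Real.Gamma s := by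
      rcases eq_or_lt_of_le hms with h | h
      · rw [h]
      · refine (Real.Gamma_strictMonoOn_Ici ?_ ?_ h).le
        · exact Set.mem_Ici.mpr (by exact_mod_cast hm2)
        · exact Set.mem_Ici.mpr (le_trans (by exact_mod_cast hm2) hms)
    have hGm' : Real.Gamma (m : ℝ) = ((m - 1).factorial : ℝ) := by
      have : ((m : ℝ)) = ((m - 1 : ℕ) : ℝ) + 1 := by
        have : 1 ≤ m := by omega
        push_cast [Nat.cast_sub this]; ring
      rw [this, Real.Gamma_nat_eq_factorial]
    have hGpos : 0 < Real.Gamma s := Real.Gamma_pos_of_pos hspos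
    have hfac : (1:ℝ) / Real.Gamma s ≤ C / M ^ (m - 1 : ℕ) := by
      have h1 : M ^ (m - 1 : ℕ) / ((m - 1).factorial : ℝ) ≤ C := hCle _
      have hMpow : (0:ℝ) < M ^ (m - 1 : ℕ) := pow_pos hM0 _
      have hfacpos : (0:ℝ) < ((m - 1).factorial : ℝ) := by positivity
      rw [div_le_div_iff₀ hGpos hMpow]
      calc 1 * M ^ (m-1:ℕ) = M ^ (m-1:ℕ) := one_mul _
        _ ≤ C * ((m-1).factorial : ℝ) := by
            rw [div_le_iff₀ hfacpos] at h1; linarith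
        _ ≤ C * Real.Gamma s := by
            rw [← hGm'] at *; nlinarith
    have hMm : M ^ (s - 2) ≤ M ^ ((m:ℝ) - 1) := by
      apply Real.rpow_le_rpow_of_exponent_le hM1; linarith
    have hMnat : M ^ ((m:ℝ) - 1) = M ^ (m - 1 : ℕ) := by
      rw [← Real.rpow_natCast M (m-1)]
      congr 1
      have : 1 ≤ m := by omega
      push_cast [Nat.cast_sub this]; ring
    have key : (1:ℝ) / Real.Gamma s ≤ C / M ^ (s - 2) := by
      refine hfac.trans ?_
      apply div_le_div_of_nonneg_left hC0.le (Real.rpow_pos_of_pos hM0 _)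
      rw [← hMnat] at *; exact hMm
    have hsplit : M ^ (s - 2) = M ^ (a * (k:ℝ)) * M ^ (b - 2) := by
      rw [← Real.rpow_add hM0]; congr 1; rw [hsdef]; ring
    have hMak : M ^ (a * (k:ℝ)) = (M ^ a) ^ k := by
      rw [Real.rpow_mul hM0.le, Real.rpow_natCast]
    have crk : c ^ k / M ^ (a * (k:ℝ)) = r ^ k := by
      rw [hMak, hr, div_pow]
    calc ((k:ℝ)+1) * c ^ k / Real.Gamma s
        = ((k:ℝ)+1) * c ^ k * (1 / Real.Gamma s) := by ring
      _ ≤ ((k:ℝ)+1) * c ^ k * (C / M ^ (s-2)) := by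
          apply mul_le_mul_of_nonneg_left key (by positivity)
      _ = C * M ^ (2 - b) * (((k:ℝ)+1) * (c ^ k / M ^ (a * (k:ℝ)))) := by
          rw [hsplit]
          rw [show (2 - b) = -(b-2) by ring, Real.rpow_neg hM0.le]
          field_simp
      _ = C * M ^ (2 - b) * (((k:ℝ)+1) * r ^ k) := by rw [crk]

lemma summable_gamma {a b c : ℝ} (ha : 0 < a) (hb : 0 < b) (hc : 0 ≤ c) :
    Summable (fun k : ℕ => ((k : ℝ) + 1) * c ^ k / Real.Gamma (a * k + b)) := by
  obtain ⟨N, hN⟩ : ∃ N : ℕ, 2 - b ≤ a * N := by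
    obtain ⟨N, hN⟩ := exists_nat_ge ((2 - b) / a)
    refine ⟨N, ?_⟩; rw [div_le_iff₀ ha] at hN; linarith
  rw [← summable_nat_add_iff N]
  have hb' : 2 ≤ a * N + b := by linarith
  have hcore := summable_gamma_core (b := a * N + b) ha hb' hc
  refine Summable.of_nonneg_of_le (fun k => ?_) (fun k => ?_)
    (hcore.mul_left (((N:ℝ) + 1) * c ^ N))
  · have hG : 0 < Real.Gamma (a * ((k + N : ℕ):ℝ) + b) :=
      Real.Gamma_pos_of_pos (by positivity)
    positivity
  · have harg : a * ((k + N : ℕ):ℝ) + b = a * k + (a * N + b) := by push_cast; ring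
    rw [harg]
    have hG : 0 < Real.Gamma (a * k + (a * N + b)) := Real.Gamma_pos_of_pos (by positivity)
    rw [mul_div_assoc', div_le_div_iff_of_pos_right hG]
    have hck : (0:ℝ) ≤ c ^ k := pow_nonneg hc k
    have hcN : (0:ℝ) ≤ c ^ N := pow_nonneg hc N
    have hk0 : (0:ℝ) ≤ (k:ℝ) := Nat.cast_nonneg k
    have hN0 : (0:ℝ) ≤ (N:ℝ) := Nat.cast_nonneg N
    rw [pow_add]
    push_cast
    nlinarith [mul_nonneg hck hcN, mul_nonneg (mul_nonneg hk0 hN0) (mul_nonneg hck hcN)]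

lemma beta_intervalIntegrable {a ρ t : ℝ} (ha : 0 < a) (hρ : ρ < 1) (ht : 0 < t) :
    IntervalIntegrable (fun s => s ^ (a - 1) * (t - s) ^ (-ρ)) volume 0 t := by
  have h1 : IntervalIntegrable (fun s => s ^ (a - 1) * (t - s) ^ (-ρ)) volume 0 (t/2) := by
    refine (intervalIntegral.intervalIntegrable_rpow' (by linarith)).mul_continuousOn ?_
    refine (continuousOn_const.sub continuousOn_id).rpow_const fun x hx => Or.inl ?_
    rw [Set.uIcc_of_le (by linarith : (0:ℝ) ≤ t/2)] at hx
    have : x ≤ t/2 := hx.2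
    intro h; simp only [Pi.sub_apply, id] at h; linarith
  have h2 : IntervalIntegrable (fun s => s ^ (a - 1) * (t - s) ^ (-ρ)) volume (t/2) t := by
    have hint : IntervalIntegrable (fun s : ℝ => (t - s) ^ (-ρ)) volume (t/2) t := by
      have := ((intervalIntegral.intervalIntegrable_rpow' (a := 0) (b := t/2)
        (r := -ρ) (by linarith)).comp_sub_left t).symm
      simpa [sub_half] using this
    refine hint.continuousOn_mul ?_
    refine (continuousOn_id).rpow_const fun x hx => Or.inl ?_
    rw [Set.uIcc_of_le (by linarith : t/2 ≤ t)] at hx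
    have : t/2 ≤ x := hx.1
    intro h; simp only [id] at h; linarith
  exact h1.trans h2

lemma beta_value {a ρ t : ℝ} (ha : 0 < a) (hρ : ρ < 1) (ht : 0 < t) :
    ∫ s in (0:ℝ)..t, s ^ (a - 1) * (t - s) ^ (-ρ)
      = Real.Gamma a * Real.Gamma (1 - ρ) / Real.Gamma (a + (1 - ρ)) * t ^ (a - ρ) := by
  have hba : 0 < 1 - ρ := by linarith
  have hGpos : 0 < Real.Gamma (a + (1 - ρ)) := Real.Gamma_pos_of_pos (by linarith)
  have hbeta : Complex.betaIntegral (a:ℂ) ((1 - ρ : ℝ):ℂ) =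
      ((Real.Gamma a * Real.Gamma (1 - ρ) / Real.Gamma (a + (1 - ρ)) : ℝ) : ℂ) := by
    have h2 := Complex.Gamma_mul_Gamma_eq_betaIntegral
      (s := (a:ℂ)) (t := ((1 - ρ : ℝ):ℂ)) (by simpa using ha) (by simpa using hba)
    have ha' : ((a:ℂ)) + ((1 - ρ : ℝ):ℂ) = ((a + (1 - ρ) : ℝ):ℂ) := by push_cast; ring
    rw [ha', Complex.Gamma_ofReal, Complex.Gamma_ofReal, Complex.Gamma_ofReal] at h2
    have hne : ((Real.Gamma (a + (1 - ρ)) : ℝ):ℂ) ≠ 0 := by exact_mod_cast hGpos.ne'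
    push_cast at h2 ⊢
    rw [eq_div_iff hne]
    linear_combination -h2
  have h1 := Complex.betaIntegral_scaled (a:ℂ) ((1 - ρ : ℝ):ℂ) ht
  have hL : (∫ x in (0:ℝ)..t, (x:ℂ) ^ ((a:ℂ) - 1) * ((t:ℂ) - x) ^ (((1 - ρ : ℝ):ℂ) - 1))
      = ((∫ s in (0:ℝ)..t, s ^ (a - 1) * (t - s) ^ (-ρ) : ℝ) : ℂ) := by
    rw [← intervalIntegral.integral_ofReal]
    refine intervalIntegral.integral_congr fun x hx => ?_
    rw [Set.uIcc_of_le ht.le] at hx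
    have hx0 : 0 ≤ x := hx.1
    have hxt : 0 ≤ t - x := by linarith [hx.2]
    have e1 : ((a:ℂ) - 1) = ((a - 1 : ℝ):ℂ) := by push_cast; ring
    have e2 : (((1 - ρ : ℝ):ℂ)) - 1 = ((-ρ : ℝ):ℂ) := by push_cast; ring
    have e3 : ((t:ℂ) - (x:ℂ)) = ((t - x : ℝ):ℂ) := by push_cast; ring
    rw [e1, e2, e3, ← Complex.ofReal_cpow hx0, ← Complex.ofReal_cpow hxt,
      ← Complex.ofReal_mul]
  rw [hL] at h1
  have hR : ((t:ℂ)) ^ ((a:ℂ) + ((1 - ρ : ℝ):ℂ) - 1) = ((t ^ (a - ρ) : ℝ) : ℂ) := by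
    have e : ((a:ℂ) + ((1 - ρ : ℝ):ℂ) - 1) = ((a - ρ : ℝ):ℂ) := by push_cast; ring
    rw [e, ← Complex.ofReal_cpow ht.le]
  rw [hR, hbeta, ← Complex.ofReal_mul] at h1
  have := Complex.ofReal_injective h1
  rw [this]; ring

section main
variable {ρ lam : ℝ}

/-- summand -/
noncomputable def mlf (ρ lam : ℝ) (k : ℕ) (s : ℝ) : ℝ :=
  (-lam) ^ k / Real.Gamma (ρ * k + 1) * s ^ (ρ * k)

/-- its derivative -/
noncomputable def mlf' (ρ lam : ℝ) (k : ℕ) (s : ℝ) : ℝ :=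
  (-lam) ^ k / Real.Gamma (ρ * k + 1) * (ρ * k * s ^ (ρ * k - 1))

lemma y_eq (hρ0 : 0 < ρ) {s : ℝ} (hs : 0 ≤ s) :
    ML ρ 1 (-lam * s ^ ρ) = ∑' k : ℕ, mlf ρ lam k s := by
  unfold ML mlf
  refine tsum_congr fun k => ?_
  rw [mul_pow, ← Real.rpow_natCast (s ^ ρ) k, ← Real.rpow_mul hs]
  ring

lemma mlf_hasDeriv (k : ℕ) {s : ℝ} (hs : s ≠ 0) :
    HasDerivAt (mlf ρ lam k) (mlf' ρ lam k s) s := by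
  unfold mlf mlf'
  exact (Real.hasDerivAt_rpow_const (Or.inl hs)).const_mul _

lemma y_hasDeriv (hρ0 : 0 < ρ) (hρ1 : ρ < 1) (hlam : 0 < lam) {s : ℝ} (hs : 0 < s) :
    HasDerivAt (fun x : ℝ => ML ρ 1 (-lam * x ^ ρ)) (∑' k : ℕ, mlf' ρ lam k s) s := by
  set c : ℝ := lam * (s + 1) ^ ρ with hc
  have hc0 : 0 ≤ c := mul_nonneg hlam.le (Real.rpow_nonneg (by linarith) _)
  set u : ℕ → ℝ := fun k => (2 / s) * (((k:ℝ) + 1) * c ^ k / Real.Gamma (ρ * k + 1)) with hu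
  have husum : Summable u := (summable_gamma hρ0 one_pos hc0).mul_left _
  have hbound : ∀ (k : ℕ) (x : ℝ), x ∈ Ioo (s/2) (s+1) → ‖mlf' ρ lam k x‖ ≤ u k := by
    intro k x hx
    obtain ⟨hx1, hx2⟩ := hx
    have hx0 : 0 < x := lt_trans (by linarith) hx1
    have hG : 0 < Real.Gamma (ρ * k + 1) := Real.Gamma_pos_of_pos (by positivity)
    have hxr : x ^ (ρ * k - 1) = x ^ (ρ * k) / x := by
      rw [Real.rpow_sub hx0, Real.rpow_one]
    have h1 : x ^ (ρ * k) ≤ (s + 1) ^ (ρ * k) :=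
      Real.rpow_le_rpow hx0.le (by linarith) (by positivity)
    have h2 : x ^ (ρ * k) / x ≤ (s + 1) ^ (ρ * k) * (2 / s) := by
      rw [div_eq_mul_inv]
      apply mul_le_mul h1 _ (by positivity) (by positivity)
      rw [inv_le_comm₀ hx0 (by positivity), inv_div]
      linarith
    have hpk : lam ^ k * (s + 1) ^ (ρ * (k:ℝ)) = c ^ k := by
      rw [hc, mul_pow, Real.rpow_mul (by linarith), Real.rpow_natCast]
    have hρk : ρ * (k:ℝ) ≤ (k:ℝ) + 1 := by
      nlinarith [Nat.cast_nonneg (α := ℝ) k]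
    rw [mlf', Real.norm_eq_abs, abs_mul, abs_div, abs_pow, abs_neg, abs_of_pos hlam,
      abs_of_pos hG, abs_mul, abs_of_nonneg (by positivity : (0:ℝ) ≤ ρ * (k:ℝ)),
      abs_of_nonneg (Real.rpow_nonneg hx0.le _)]
    rw [hu]
    calc lam ^ k / Real.Gamma (ρ * k + 1) * (ρ * k * x ^ (ρ * k - 1))
        ≤ lam ^ k / Real.Gamma (ρ * k + 1) * (((k:ℝ) + 1) * ((s+1) ^ (ρ * (k:ℝ)) * (2/s))) := by
          apply mul_le_mul_of_nonneg_left _ (by positivity)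
          rw [hxr]
          apply mul_le_mul hρk h2 (by positivity) (by positivity)
      _ = (2 / s) * (((k:ℝ) + 1) * (lam ^ k * (s+1) ^ (ρ * (k:ℝ))) / Real.Gamma (ρ * k + 1)) := by
          ring
      _ = (2 / s) * (((k:ℝ) + 1) * c ^ k / Real.Gamma (ρ * k + 1)) := by rw [hpk]
  have hmem : s ∈ Ioo (s/2) (s+1) := ⟨by linarith, by linarith⟩
  have hsum0 : Summable fun k : ℕ => mlf ρ lam k s := by
    refine Summable.of_norm_bounded ((summable_gamma hρ0 one_pos hc0).mul_left 1) fun k => ?_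
    have hG : 0 < Real.Gamma (ρ * k + 1) := Real.Gamma_pos_of_pos (by positivity)
    rw [mlf, Real.norm_eq_abs, abs_mul, abs_div, abs_pow, abs_neg, abs_of_pos hlam,
      abs_of_pos hG, abs_of_nonneg (Real.rpow_nonneg hs.le _)]
    have h1 : s ^ (ρ * (k:ℝ)) ≤ (s+1) ^ (ρ * (k:ℝ)) :=
      Real.rpow_le_rpow hs.le (by linarith) (by positivity)
    have hpk : lam ^ k * (s + 1) ^ (ρ * (k:ℝ)) = c ^ k := by
      rw [hc, mul_pow, Real.rpow_mul (by linarith), Real.rpow_natCast]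
    rw [one_mul]
    calc lam ^ k / Real.Gamma (ρ * k + 1) * s ^ (ρ * (k:ℝ))
        ≤ lam ^ k / Real.Gamma (ρ * k + 1) * (s+1) ^ (ρ * (k:ℝ)) := by
          apply mul_le_mul_of_nonneg_left h1 (by positivity)
      _ = c ^ k / Real.Gamma (ρ * k + 1) := by rw [← hpk]; ring
      _ ≤ ((k:ℝ) + 1) * c ^ k / Real.Gamma (ρ * k + 1) := by
          gcongr
          nlinarith [pow_nonneg hc0 k, Nat.cast_nonneg (α := ℝ) k]
  have hder := hasDerivAt_tsum_of_isPreconnected husum isOpen_Ioo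
    (isPreconnected_Ioo) (fun k x hx => mlf_hasDeriv k (ne_of_gt (lt_trans (by linarith) hx.1)))
    hbound hmem hsum0 hmem
  refine HasDerivAt.congr_of_eventuallyEq hder ?_
  filter_upwards [Ioi_mem_nhds hs] with x hx
  exact y_eq hρ0 (le_of_lt hx)

end main

noncomputable def capF (ρ lam t : ℝ) (k : ℕ) (s : ℝ) : ℝ :=
  ((-lam) ^ k / Real.Gamma (ρ * k + 1) * (ρ * k)) * (s ^ (ρ * k - 1) * (t - s) ^ (-ρ))

variable {ρ lam t : ℝ}

lemma capF_zero (s : ℝ) : capF ρ lam t 0 s = 0 := by simp [capF]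

lemma beta_core {a C : ℝ} (ha : 0 < a) (hρ1 : ρ < 1) (ht : 0 < t) :
    ∫ s in Ioc (0:ℝ) t, C * (s ^ (a - 1) * (t - s) ^ (-ρ))
      = C * (Real.Gamma a * Real.Gamma (1 - ρ) / Real.Gamma (a + (1 - ρ)) * t ^ (a - ρ)) := by
  rw [MeasureTheory.integral_const_mul, ← intervalIntegral.integral_of_le ht.le,
    beta_value ha hρ1 ht]

lemma capF_coeff (hρ0 : 0 < ρ) (k : ℕ) {x : ℝ} :
    x ^ (k+1) / Real.Gamma (ρ * ((k:ℝ)+1) + 1) * (ρ * ((k:ℝ)+1))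
      = x ^ (k+1) / Real.Gamma (ρ * ((k:ℝ)+1)) := by
  have ha : (0:ℝ) < ρ * ((k:ℝ)+1) := by positivity
  rw [Real.Gamma_add_one ha.ne']
  field_simp

lemma capF_integrable (hρ0 : 0 < ρ) (hρ1 : ρ < 1) (ht : 0 < t) (k : ℕ) :
    IntegrableOn (capF ρ lam t k) (Ioc 0 t) volume := by
  cases k with
  | zero =>
    have : capF ρ lam t 0 = fun _ : ℝ => (0:ℝ) := funext capF_zero
    rw [this]
    exact integrable_zero _ _ _
  | succ n =>
    have ha : (0:ℝ) < ρ * ((n:ℝ) + 1) := by positivity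
    have h := ((beta_intervalIntegrable (a := ρ * ((n:ℝ)+1)) ha hρ1 ht).const_mul
      ((-lam) ^ (n+1) / Real.Gamma (ρ * ((n:ℝ)+1) + 1) * (ρ * ((n:ℝ)+1))))
    rw [intervalIntegrable_iff_integrableOn_Ioc_of_le ht.le] at h
    have : capF ρ lam t (n+1) = fun s =>
        ((-lam) ^ (n+1) / Real.Gamma (ρ * ((n:ℝ)+1) + 1) * (ρ * ((n:ℝ)+1))) *
          (s ^ (ρ * ((n:ℝ)+1) - 1) * (t - s) ^ (-ρ)) := by
      funext s; simp only [capF]; push_cast; ring_nf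
    rw [this]
    exact h

lemma capF_value (hρ0 : 0 < ρ) (hρ1 : ρ < 1) (ht : 0 < t) (k : ℕ) {x : ℝ} :
    ∫ s in Ioc (0:ℝ) t,
        (x ^ (k+1) / Real.Gamma (ρ * ((k:ℝ)+1) + 1) * (ρ * ((k:ℝ)+1))) *
          (s ^ (ρ * ((k:ℝ)+1) - 1) * (t - s) ^ (-ρ))
      = x ^ (k+1) * Real.Gamma (1 - ρ) * t ^ (ρ * k) / Real.Gamma (ρ * k + 1) := by
  have ha : (0:ℝ) < ρ * ((k:ℝ)+1) := by positivity
  have hGa : 0 < Real.Gamma (ρ * ((k:ℝ)+1)) := Real.Gamma_pos_of_pos ha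
  have hGb : 0 < Real.Gamma (ρ * ((k:ℝ)+1) + (1 - ρ)) := Real.Gamma_pos_of_pos (by nlinarith)
  rw [beta_core ha hρ1 ht, capF_coeff hρ0 k]
  have e1 : ρ * ((k:ℝ)+1) + (1 - ρ) = ρ * k + 1 := by ring
  have e2 : ρ * ((k:ℝ)+1) - ρ = ρ * k := by ring
  rw [e1, e2]
  field_simp

section main2
variable {ρ lam t : ℝ}

lemma capF_succ_eq (k : ℕ) : capF ρ lam t (k+1) = fun s =>
    ((-lam) ^ (k+1) / Real.Gamma (ρ * ((k:ℝ)+1) + 1) * (ρ * ((k:ℝ)+1))) *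
      (s ^ (ρ * ((k:ℝ)+1) - 1) * (t - s) ^ (-ρ)) := by
  funext s; simp only [capF]; push_cast; ring_nf

lemma capF_integral_succ (hρ0 : 0 < ρ) (hρ1 : ρ < 1) (ht : 0 < t) (k : ℕ) :
    ∫ s in Ioc (0:ℝ) t, capF ρ lam t (k+1) s
      = (-lam)^(k+1) * Real.Gamma (1-ρ) * t ^ (ρ*k) / Real.Gamma (ρ*k+1) := by
  rw [capF_succ_eq]; exact capF_value hρ0 hρ1 ht k

lemma capF_norm_integral_succ (hρ0 : 0 < ρ) (hρ1 : ρ < 1) (hlam : 0 < lam) (ht : 0 < t)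
    (k : ℕ) : ∫ s in Ioc (0:ℝ) t, ‖capF ρ lam t (k+1) s‖
      = lam^(k+1) * Real.Gamma (1-ρ) * t ^ (ρ*k) / Real.Gamma (ρ*k+1) := by
  have hG : 0 < Real.Gamma (ρ * ((k:ℝ)+1) + 1) := Real.Gamma_pos_of_pos (by positivity)
  have hcongr : ∀ s ∈ Ioc (0:ℝ) t, ‖capF ρ lam t (k+1) s‖
      = (lam ^ (k+1) / Real.Gamma (ρ * ((k:ℝ)+1) + 1) * (ρ * ((k:ℝ)+1))) *
          (s ^ (ρ * ((k:ℝ)+1) - 1) * (t - s) ^ (-ρ)) := by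
    intro s hs
    rw [capF_succ_eq]
    have h1 : (0:ℝ) ≤ s ^ (ρ * ((k:ℝ)+1) - 1) := Real.rpow_nonneg hs.1.le _
    have h2 : (0:ℝ) ≤ (t - s) ^ (-ρ) := Real.rpow_nonneg (by linarith [hs.2]) _
    rw [Real.norm_eq_abs, abs_mul, abs_of_nonneg (mul_nonneg h1 h2), abs_mul, abs_div,
      abs_pow, abs_neg, abs_of_pos hlam, abs_of_pos hG,
      abs_of_nonneg (by positivity : (0:ℝ) ≤ ρ * ((k:ℝ)+1))]
  rw [setIntegral_congr_fun measurableSet_Ioc hcongr]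
  exact capF_value hρ0 hρ1 ht k

theorem mittagLeffler_solves_ode (ρ lam : ℝ) (hρ : ρ ∈ Set.Ioo (0:ℝ) 1) (hlam : 0 < lam) :
    let y : ℝ → ℝ := fun t => ML ρ 1 (-lam * t ^ ρ)
    (∀ t : ℝ, 0 < t → caputo ρ y t = -lam * y t) ∧ y 0 = 1 := by
  obtain ⟨hρ0, hρ1⟩ := hρ
  intro y
  have hyf : y = fun t => ML ρ 1 (-lam * t ^ ρ) := rfl
  constructor
  · intro t ht
    have hGρ : 0 < Real.Gamma (1 - ρ) := Real.Gamma_pos_of_pos (by linarith)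
    have htρ : (0:ℝ) ≤ lam * t ^ ρ := by positivity
    -- step 1 : integrand as a series
    have hstep1 : (∫ s in (0:ℝ)..t, (t - s) ^ (-ρ) * deriv y s)
        = ∫ s in Ioc (0:ℝ) t, ∑' k : ℕ, capF ρ lam t k s := by
      rw [intervalIntegral.integral_of_le ht.le]
      refine setIntegral_congr_fun measurableSet_Ioc fun s hs => ?_
      have hs0 : 0 < s := hs.1
      have hder : deriv y s = ∑' k : ℕ, mlf' ρ lam k s := by
        rw [hyf]; exact (y_hasDeriv hρ0 hρ1 hlam hs0).deriv
      rw [hder, ← tsum_mul_left]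
      exact tsum_congr fun k => by rw [mlf', capF]; ring
    -- the summable majorant
    set w : ℕ → ℝ := fun k =>
      Real.Gamma (1-ρ) * t ^ (-ρ) * (((k:ℝ)+1) * (lam * t ^ ρ)^k / Real.Gamma (ρ*k + (1-ρ)))
      with hw
    have hwsum : Summable w := (summable_gamma hρ0 (by linarith) htρ).mul_left _
    have hw0 : ∀ k, 0 ≤ w k := by
      intro k
      have hGg : 0 < Real.Gamma (ρ*k + (1-ρ)) := Real.Gamma_pos_of_pos
        (by nlinarith [mul_nonneg hρ0.le (Nat.cast_nonneg (α := ℝ) k)])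
      rw [hw]
      exact mul_nonneg (mul_nonneg hGρ.le (Real.rpow_nonneg ht.le _))
        (div_nonneg (by positivity) hGg.le)
    -- the exact norm values are ≤ w (k+1)
    have hval_le : ∀ k : ℕ,
        lam^(k+1) * Real.Gamma (1-ρ) * t ^ (ρ*k) / Real.Gamma (ρ*k+1) ≤ w (k+1) := by
      intro k
      have e1 : ρ * ((k:ℝ)+1) + (1-ρ) = ρ*k + 1 := by ring
      have hpow : (lam * t ^ ρ) ^ (k+1) = lam^(k+1) * t ^ (ρ * ((k:ℝ)+1)) := by
        rw [mul_pow, ← Real.rpow_natCast (t ^ ρ) (k+1), ← Real.rpow_mul ht.le]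
        push_cast
        ring_nf
      have hGk : 0 < Real.Gamma (ρ*k+1) := Real.Gamma_pos_of_pos (by positivity)
      have ht2 : t ^ (-ρ) * t ^ (ρ * ((k:ℝ)+1)) = t ^ (ρ * k) := by
        rw [← Real.rpow_add ht]; congr 1; ring
      have : w (k+1) = ((k:ℝ)+2) * (lam^(k+1) * Real.Gamma (1-ρ) * t ^ (ρ*k)
          / Real.Gamma (ρ*k+1)) := by
        rw [hw]
        push_cast [hpow]
        rw [show ρ * ((k:ℝ)+1) + (1-ρ) = ρ*(k:ℝ) + 1 by ring]
        rw [div_eq_mul_inv, div_eq_mul_inv]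
        linear_combination (Real.Gamma (1-ρ) * ((k:ℝ)+2) * lam^(k+1) *
          (Real.Gamma (ρ*k+1))⁻¹) * ht2
      rw [this]
      have hnn : 0 ≤ lam^(k+1) * Real.Gamma (1-ρ) * t ^ (ρ*k) / Real.Gamma (ρ*k+1) := by
        positivity
      nlinarith [Nat.cast_nonneg (α := ℝ) k]
    -- measurability
    have hmeas : ∀ k : ℕ, AEStronglyMeasurable (capF ρ lam t k)
        (volume.restrict (Ioc 0 t)) := by
      intro k
      apply Measurable.aestronglyMeasurable
      unfold capF
      fun_prop
    -- lintegral bound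
    have hlint : ∀ k : ℕ, (∫⁻ s in Ioc (0:ℝ) t, ‖capF ρ lam t k s‖₊)
        ≤ ENNReal.ofReal (w k) := by
      intro k
      cases k with
      | zero =>
        have : ∀ s, (‖capF ρ lam t 0 s‖₊ : ENNReal) = 0 := by
          intro s; simp [capF_zero]
        simp only [this, lintegral_const, zero_mul]
        simp
      | succ n =>
        simp only [← enorm_eq_nnnorm]
        rw [← MeasureTheory.ofReal_integral_norm_eq_lintegral_enorm
          ((capF_integrable hρ0 hρ1 ht (n+1)))]
        exact ENNReal.ofReal_le_ofReal
          ((capF_norm_integral_succ hρ0 hρ1 hlam ht n).le.trans (hval_le n))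
    have hlinttop : (∑' k : ℕ, ∫⁻ s in Ioc (0:ℝ) t, ‖capF ρ lam t k s‖₊) ≠ ⊤ := by
      refine ne_top_of_le_ne_top ?_ (ENNReal.tsum_le_tsum hlint)
      rw [← ENNReal.ofReal_tsum_of_nonneg hw0 hwsum]
      exact ENNReal.ofReal_ne_top
    -- interchange
    have hinter : (∫ s in Ioc (0:ℝ) t, ∑' k : ℕ, capF ρ lam t k s)
        = ∑' k : ℕ, ∫ s in Ioc (0:ℝ) t, capF ρ lam t k s :=
      MeasureTheory.integral_tsum hmeas hlinttop
    -- summability of the integrals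
    have hsumint : Summable (fun k : ℕ => ∫ s in Ioc (0:ℝ) t, capF ρ lam t k s) := by
      refine Summable.of_norm_bounded hwsum fun k => ?_
      cases k with
      | zero =>
        have : capF ρ lam t 0 = fun _ : ℝ => (0:ℝ) := funext capF_zero
        rw [this]
        simp [hw0 0]
      | succ n =>
        refine (MeasureTheory.norm_integral_le_integral_norm _).trans ?_
        rw [capF_norm_integral_succ hρ0 hρ1 hlam ht n]
        exact hval_le n
    -- final computation
    have hzero : (∫ s in Ioc (0:ℝ) t, capF ρ lam t 0 s) = 0 := by
      have : capF ρ lam t 0 = fun _ : ℝ => (0:ℝ) := funext capF_zero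
      rw [this]; simp
    have hfinal : (∑' k : ℕ, ∫ s in Ioc (0:ℝ) t, capF ρ lam t k s)
        = Real.Gamma (1-ρ) * (-lam) * ∑' k : ℕ, mlf ρ lam k t := by
      rw [Summable.tsum_eq_zero_add hsumint, hzero, zero_add, ← tsum_mul_left]
      refine tsum_congr fun k => ?_
      rw [capF_integral_succ hρ0 hρ1 ht k, mlf, pow_succ]
      ring
    have hyt : y t = ∑' k : ℕ, mlf ρ lam k t := y_eq hρ0 ht.le
    show (1 / Real.Gamma (1 - ρ)) * (∫ s in (0:ℝ)..t, (t - s) ^ (-ρ) * deriv y s)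
        = -lam * y t
    rw [hstep1, hinter, hfinal, hyt]
    field_simp
  · show ML ρ 1 (-lam * (0:ℝ) ^ ρ) = 1
    rw [Real.zero_rpow hρ0.ne', mul_zero, ML]
    rw [tsum_eq_single 0 (fun k hk => by simp [zero_pow hk])]
    norm_num [Real.Gamma_one]
end main2
end
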